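/- arXiv:2603.23835 — 2 statements merged into one kernel-verified Lean document; each statement's English description precedes it below -/
import Mathlib

section
/- (Uniform law of large numbers for the risk-set process over a fixed sparse ReLU class.) Fix τ > 0 and a sparse ReLU network class F(L,p,s,F) with fixed architecture and envelope bound ‖g‖∞ ≤ F for all g in the class (functions on [0,1]^{p0}). Let (T_i, X_i), i = 1, 2, ..., be i.i.d. with T_i ≥ 0 and X_i ∈ [0,1]^{p0}, and define S_n^(0)(t; g) = n^{−1} Σ_{i=1}^n 1{T_i ≥ t} exp(g(X_i)) and S^(0)(t; g) = E[1{T ≥ t} exp(g(X))]. Then sup_{t ∈ [0,τ]} sup_{g ∈ F(L,p,s,F)} | S_n^(0)(t; g) − S^(0)(t; g) | → 0 almost surely as n → ∞. -/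
/-!
# Statement 12 (Uniform LLN for the risk-set process over a fixed sparse ReLU class)

For i.i.d. `(T_i, X_i)` with `T_i ≥ 0`, `X_i ∈ [0,1]^{p0}`, the empirical risk-set
average `S_n⁽⁰⁾(t; g)` converges to `S⁽⁰⁾(t; g)` almost surely, uniformly over
`t ∈ [0,τ]` and `g` in a fixed sparse ReLU network class `F(L,p,s,F)`.
-/

open MeasureTheory ProbabilityTheory Filter

noncomputable section

namespace CoxDNN

def cube (p0 : ℕ) : Set (Fin p0 → ℝ) := {x | ∀ i, x i ∈ Set.Icc (0 : ℝ) 1}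

structure ReluNet (p0 : ℕ) where
  L : ℕ
  width : ℕ → ℕ
  W : ℕ → ℕ → ℕ → ℝ
  v : ℕ → ℕ → ℝ

def hiddenOut {p0 : ℕ} (N : ReluNet p0) (x : Fin p0 → ℝ) : ℕ → ℕ → ℝ
  | 0, j => if h : j < p0 then x ⟨j, h⟩ else 0
  | l + 1, i =>
      max ((∑ j ∈ Finset.range (N.width l), N.W l i j * hiddenOut N x l j) - N.v (l + 1) i) 0

def netEval {p0 : ℕ} (N : ReluNet p0) (x : Fin p0 → ℝ) : ℝ :=
  ∑ j ∈ Finset.range (N.width N.L), N.W N.L 0 j * hiddenOut N x N.L j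

def sparsity {p0 : ℕ} (N : ReluNet p0) : ℕ :=
  (∑ l ∈ Finset.range (N.L + 1),
    ((Finset.range (N.width (l + 1)) ×ˢ Finset.range (N.width l)).filter
      (fun ij => N.W l ij.1 ij.2 ≠ 0)).card) +
  ∑ l ∈ Finset.range N.L,
    ((Finset.range (N.width (l + 1))).filter (fun i => N.v (l + 1) i ≠ 0)).card

def ParamsBounded {p0 : ℕ} (N : ReluNet p0) : Prop :=
  (∀ l i j, |N.W l i j| ≤ 1) ∧ ∀ l i, |N.v l i| ≤ 1

def sparseReluClass (p0 : ℕ) (L : ℕ) (p : ℕ → ℕ) (s : ℕ) (F : ℝ) :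
    Set ((Fin p0 → ℝ) → ℝ) :=
  {g | ∃ N : ReluNet p0, N.L = L ∧ N.width = p ∧ p 0 = p0 ∧ p (L + 1) = 1 ∧
    ParamsBounded N ∧ sparsity N ≤ s ∧
    (∀ x, g x = netEval N x - netEval N 0) ∧
    ∀ x ∈ cube p0, |g x| ≤ F}

-- ### auxiliary bounds
variable {p0 : ℕ}

lemma measurable_hiddenOut (N : ReluNet p0) (l j : ℕ) :
    Measurable fun x => hiddenOut N x l j := by
  induction l generalizing j with
  | zero =>
      simp only [hiddenOut]
      split
      · exact measurable_pi_apply _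
      · exact measurable_const
  | succ l ih =>
      simp only [hiddenOut]
      refine Measurable.max ?_ measurable_const
      exact (Finset.measurable_sum _ fun j _ => (ih j).const_mul _).sub measurable_const

lemma measurable_netEval (N : ReluNet p0) : Measurable (netEval N) :=
  Finset.measurable_sum _ fun j _ => (measurable_hiddenOut N N.L j).const_mul _

/-- bound recursion for hidden layer outputs -/
def Mb (p : ℕ → ℕ) : ℕ → ℝ
  | 0 => 1
  | l + 1 => p l * Mb p l + 1

lemma Mb_nonneg (p : ℕ → ℕ) : ∀ l, 0 ≤ Mb p l
  | 0 => by norm_num [Mb]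
  | l + 1 => by
      have := Mb_nonneg p l
      simp only [Mb]; positivity

/-- Lipschitz (in parameters) recursion -/
def Cd (p : ℕ → ℕ) : ℕ → ℝ
  | 0 => 0
  | l + 1 => p l * (Mb p l + Cd p l) + 1

lemma Cd_nonneg (p : ℕ → ℕ) : ∀ l, 0 ≤ Cd p l
  | 0 => le_refl _
  | l + 1 => by
      have h1 := Mb_nonneg p l
      have h2 := Cd_nonneg p l
      simp only [Cd]; positivity

lemma hiddenOut_bound (N : ReluNet p0) (p : ℕ → ℕ) (hb : ParamsBounded N)
    (hw : N.width = p) (x : Fin p0 → ℝ) (hx : ∀ i, |x i| ≤ 1) :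
    ∀ l j, |hiddenOut N x l j| ≤ Mb p l := by
  intro l
  induction l with
  | zero =>
      intro j
      simp only [hiddenOut, Mb]
      split
      · exact hx _
      · norm_num
  | succ l ih =>
      intro i
      simp only [hiddenOut, Mb]
      have key : |(∑ j ∈ Finset.range (N.width l), N.W l i j * hiddenOut N x l j)
          - N.v (l + 1) i| ≤ p l * Mb p l + 1 := by
        refine (abs_sub _ _).trans ?_
        gcongr
        · calc |∑ j ∈ Finset.range (N.width l), N.W l i j * hiddenOut N x l j|
              ≤ ∑ j ∈ Finset.range (N.width l), |N.W l i j * hiddenOut N x l j| :=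
                Finset.abs_sum_le_sum_abs _ _
            _ ≤ ∑ _j ∈ Finset.range (N.width l), 1 * Mb p l := by
                refine Finset.sum_le_sum fun j _ => ?_
                rw [abs_mul]
                exact mul_le_mul (hb.1 l i j) (ih j) (abs_nonneg _) zero_le_one
            _ = p l * Mb p l := by
                rw [Finset.sum_const, Finset.card_range, hw]; ring
        · exact hb.2 _ _
      calc |max ((∑ j ∈ Finset.range (N.width l), N.W l i j * hiddenOut N x l j)
            - N.v (l + 1) i) 0|
          ≤ |(∑ j ∈ Finset.range (N.width l), N.W l i j * hiddenOut N x l j)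
            - N.v (l + 1) i| := by
            rw [abs_of_nonneg (le_max_right _ _)]
            exact max_le (le_abs_self _) (abs_nonneg _)
        _ ≤ _ := key

lemma netEval_bound (N : ReluNet p0) (p : ℕ → ℕ) (hb : ParamsBounded N)
    (hw : N.width = p) (x : Fin p0 → ℝ) (hx : ∀ i, |x i| ≤ 1) :
    |netEval N x| ≤ Mb p (N.L + 1) := by
  have : |netEval N x| ≤ p N.L * Mb p N.L := by
    calc |netEval N x| ≤ ∑ j ∈ Finset.range (N.width N.L), |N.W N.L 0 j * hiddenOut N x N.L j| :=
          Finset.abs_sum_le_sum_abs _ _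
      _ ≤ ∑ _j ∈ Finset.range (N.width N.L), 1 * Mb p N.L := by
          refine Finset.sum_le_sum fun j _ => ?_
          rw [abs_mul]
          exact mul_le_mul (hb.1 _ _ _) (hiddenOut_bound N p hb hw x hx N.L j)
            (abs_nonneg _) zero_le_one
      _ = p N.L * Mb p N.L := by rw [Finset.sum_const, Finset.card_range, hw]; ring
  simp only [Mb]
  linarith

lemma hiddenOut_diff (N N' : ReluNet p0) (p : ℕ → ℕ) (L : ℕ) (δ : ℝ) (hδ : 0 ≤ δ)
    (hb : ParamsBounded N) (hb' : ParamsBounded N')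
    (hL : N.L = L) (hw : N.width = p) (hw' : N'.width = p)
    (hWc : ∀ l i j, l ≤ L → i < p (l + 1) → j < p l → |N.W l i j - N'.W l i j| ≤ δ)
    (hvc : ∀ l i, 1 ≤ l → l ≤ L → i < p l → |N.v l i - N'.v l i| ≤ δ)
    (x : Fin p0 → ℝ) (hx : ∀ i, |x i| ≤ 1) :
    ∀ l, l ≤ L → ∀ j, j < p l → |hiddenOut N x l j - hiddenOut N' x l j| ≤ δ * Cd p l := by
  intro l
  induction l with
  | zero => intro _ j _; simp only [hiddenOut, Cd, mul_zero, sub_self, abs_zero]; exact le_refl _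
  | succ l ih =>
      intro hlL i hi
      have hl : l ≤ L := Nat.le_of_succ_le hlL
      simp only [hiddenOut]
      have hmax : ∀ a b : ℝ, |max a 0 - max b 0| ≤ |a - b| := fun a b =>
        abs_max_sub_max_le_abs a b 0
      refine (hmax _ _).trans ?_
      have hsum : |∑ j ∈ Finset.range (N.width l), N.W l i j * hiddenOut N x l j
          - ∑ j ∈ Finset.range (N'.width l), N'.W l i j * hiddenOut N' x l j|
          ≤ p l * (δ * Mb p l + δ * Cd p l) := by
        rw [hw, hw', ← Finset.sum_sub_distrib]
        refine (Finset.abs_sum_le_sum_abs _ _).trans ?_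
        have hterm : ∀ j ∈ Finset.range (p l),
            |N.W l i j * hiddenOut N x l j - N'.W l i j * hiddenOut N' x l j|
            ≤ δ * Mb p l + δ * Cd p l := by
          intro j hj
          rw [Finset.mem_range] at hj
          have expand : N.W l i j * hiddenOut N x l j - N'.W l i j * hiddenOut N' x l j
              = (N.W l i j - N'.W l i j) * hiddenOut N x l j
                + N'.W l i j * (hiddenOut N x l j - hiddenOut N' x l j) := by ring
          rw [expand]
          refine (abs_add_le _ _).trans ?_
          gcongr
          · rw [abs_mul]
            exact mul_le_mul (hWc l i j hl hi hj) (hiddenOut_bound N p hb hw x hx l j)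
              (abs_nonneg _) hδ
          · rw [abs_mul]
            calc |N'.W l i j| * |hiddenOut N x l j - hiddenOut N' x l j|
                ≤ 1 * (δ * Cd p l) :=
                  mul_le_mul (hb'.1 _ _ _) (ih hl j hj) (abs_nonneg _) zero_le_one
              _ = δ * Cd p l := one_mul _
        refine (Finset.sum_le_sum hterm).trans ?_
        rw [Finset.sum_const, Finset.card_range, nsmul_eq_mul]
      calc |(∑ j ∈ Finset.range (N.width l), N.W l i j * hiddenOut N x l j - N.v (l + 1) i)
            - (∑ j ∈ Finset.range (N'.width l), N'.W l i j * hiddenOut N' x l j - N'.v (l + 1) i)|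
          ≤ |∑ j ∈ Finset.range (N.width l), N.W l i j * hiddenOut N x l j
              - ∑ j ∈ Finset.range (N'.width l), N'.W l i j * hiddenOut N' x l j|
            + |N.v (l + 1) i - N'.v (l + 1) i| := by
            have e : (∑ j ∈ Finset.range (N.width l), N.W l i j * hiddenOut N x l j - N.v (l + 1) i)
                - (∑ j ∈ Finset.range (N'.width l), N'.W l i j * hiddenOut N' x l j - N'.v (l + 1) i)
                = (∑ j ∈ Finset.range (N.width l), N.W l i j * hiddenOut N x l j
                  - ∑ j ∈ Finset.range (N'.width l), N'.W l i j * hiddenOut N' x l j)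
                  - (N.v (l + 1) i - N'.v (l + 1) i) := by ring
            rw [e]
            exact abs_sub _ _
        _ ≤ p l * (δ * Mb p l + δ * Cd p l) + δ :=
            add_le_add hsum (hvc (l + 1) i (Nat.succ_le_succ (Nat.zero_le _)) hlL hi)
        _ = δ * Cd p (l + 1) := by simp only [Cd]; ring

lemma netEval_diff (N N' : ReluNet p0) (p : ℕ → ℕ) (L : ℕ) (δ : ℝ) (hδ : 0 ≤ δ)
    (hb : ParamsBounded N) (hb' : ParamsBounded N')
    (hL : N.L = L) (hL' : N'.L = L) (hw : N.width = p) (hw' : N'.width = p)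
    (hpL1 : 0 < p (L + 1))
    (hWc : ∀ l i j, l ≤ L → i < p (l + 1) → j < p l → |N.W l i j - N'.W l i j| ≤ δ)
    (hvc : ∀ l i, 1 ≤ l → l ≤ L → i < p l → |N.v l i - N'.v l i| ≤ δ)
    (x : Fin p0 → ℝ) (hx : ∀ i, |x i| ≤ 1) :
    |netEval N x - netEval N' x| ≤ δ * Cd p (L + 1) := by
  unfold netEval
  rw [hL, hL', hw, hw', ← Finset.sum_sub_distrib]
  refine (Finset.abs_sum_le_sum_abs _ _).trans ?_
  have hterm : ∀ j ∈ Finset.range (p L),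
      |N.W L 0 j * hiddenOut N x L j - N'.W L 0 j * hiddenOut N' x L j|
      ≤ δ * Mb p L + δ * Cd p L := by
    intro j hj
    rw [Finset.mem_range] at hj
    have expand : N.W L 0 j * hiddenOut N x L j - N'.W L 0 j * hiddenOut N' x L j
        = (N.W L 0 j - N'.W L 0 j) * hiddenOut N x L j
          + N'.W L 0 j * (hiddenOut N x L j - hiddenOut N' x L j) := by ring
    rw [expand]
    refine (abs_add_le _ _).trans ?_
    gcongr
    · rw [abs_mul]
      exact mul_le_mul (hWc L 0 j le_rfl hpL1 hj) (hiddenOut_bound N p hb hw x hx L j)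
        (abs_nonneg _) hδ
    · rw [abs_mul]
      calc |N'.W L 0 j| * |hiddenOut N x L j - hiddenOut N' x L j|
          ≤ 1 * (δ * Cd p L) :=
            mul_le_mul (hb'.1 _ _ _)
              (hiddenOut_diff N N' p L δ hδ hb hb' hL hw hw' hWc hvc x hx L le_rfl j hj)
              (abs_nonneg _) zero_le_one
        _ = δ * Cd p L := one_mul _
  refine (Finset.sum_le_sum hterm).trans ?_
  rw [Finset.sum_const, Finset.card_range, nsmul_eq_mul]
  have h1 := Mb_nonneg p L
  have h2 := Cd_nonneg p L
  simp only [Cd]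
  nlinarith [mul_nonneg (mul_nonneg (Nat.cast_nonneg (p L) : (0:ℝ) ≤ p L) hδ) h1]

lemma exp_abs_sub_le {a b c : ℝ} (ha : |a| ≤ c) (hb : |b| ≤ c) :
    |Real.exp a - Real.exp b| ≤ Real.exp c * |a - b| := by
  wlog hab : b ≤ a generalizing a b
  · rw [abs_sub_comm, abs_sub_comm a b]
    exact this hb ha (le_of_not_ge hab)
  have h1 : Real.exp b ≤ Real.exp a := Real.exp_le_exp.2 hab
  rw [abs_of_nonneg (by linarith), abs_of_nonneg (by linarith : (0:ℝ) ≤ a - b)]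
  have key : Real.exp a - Real.exp b ≤ (a - b) * Real.exp a := by
    have h2 : 1 - (a - b) ≤ Real.exp (-(a - b)) := by
      have := Real.add_one_le_exp (-(a - b))
      linarith
    have h3 : Real.exp a * (1 - (a - b)) ≤ Real.exp a * Real.exp (-(a - b)) := by
      exact mul_le_mul_of_nonneg_left h2 (Real.exp_pos a).le
    rw [← Real.exp_add] at h3
    have : a + -(a - b) = b := by ring
    rw [this] at h3
    nlinarith
  have hac : Real.exp a ≤ Real.exp c := Real.exp_le_exp.2 (le_trans (le_abs_self a) ha)
  nlinarith [Real.exp_pos a, sub_nonneg.2 hab]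

/-- maximal width over levels `0..L+1` -/
def Pmax (L : ℕ) (p : ℕ → ℕ) : ℕ := (Finset.range (L + 2)).sup p

lemma le_Pmax (L : ℕ) (p : ℕ → ℕ) {l : ℕ} (hl : l ≤ L + 1) : p l ≤ Pmax L p :=
  Finset.le_sup (Finset.mem_range.2 (Nat.lt_succ_of_le hl))

/-- Finite index for the discretized parameter grid. -/
def NetIdx (L P m : ℕ) : Type :=
  (Fin (L + 1) → Fin P → Fin P → Fin (2 * m + 1)) × (Fin (L + 1) → Fin P → Fin (2 * m + 1))

instance (L P m : ℕ) : Fintype (NetIdx L P m) := by unfold NetIdx; infer_instance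
instance (L P m : ℕ) : Nonempty (NetIdx L P m) := by
  unfold NetIdx
  exact ⟨fun _ _ _ => ⟨0, by omega⟩, fun _ _ => ⟨0, by omega⟩⟩

/-- discretized value -/
def val01 (m k : ℕ) : ℝ := ((k : ℝ) - m) / m

lemma abs_val01_le (m k : ℕ) (hm : 1 ≤ m) (hk : k < 2 * m + 1) : |val01 m k| ≤ 1 := by
  have hm' : (0:ℝ) < m := by exact_mod_cast hm
  have hk' : (k:ℝ) ≤ 2 * m := by exact_mod_cast Nat.lt_succ_iff.1 hk
  have hk0 : (0:ℝ) ≤ k := Nat.cast_nonneg k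
  rw [val01, abs_div, abs_of_pos hm', div_le_one hm', abs_sub_le_iff]
  constructor <;> linarith

/-- the network attached to a grid index -/
def idxNet (p0 L : ℕ) (p : ℕ → ℕ) (m : ℕ) (θ : NetIdx L (Pmax L p) m) : ReluNet p0 where
  L := L
  width := p
  W := fun l i j =>
    if h : l < L + 1 ∧ i < Pmax L p ∧ j < Pmax L p then
      val01 m (θ.1 ⟨l, h.1⟩ ⟨i, h.2.1⟩ ⟨j, h.2.2⟩) else 0
  v := fun l i =>
    if h : 1 ≤ l ∧ l - 1 < L + 1 ∧ i < Pmax L p then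
      val01 m (θ.2 ⟨l - 1, h.2.1⟩ ⟨i, h.2.2⟩) else 0

lemma idxNet_bounded (p0 L : ℕ) (p : ℕ → ℕ) (m : ℕ) (hm : 1 ≤ m)
    (θ : NetIdx L (Pmax L p) m) : ParamsBounded (idxNet p0 L p m θ) := by
  constructor
  · intro l i j
    simp only [idxNet]
    split
    · exact abs_val01_le m _ hm (Fin.is_lt _)
    · simp
  · intro l i
    simp only [idxNet]
    split
    · exact abs_val01_le m _ hm (Fin.is_lt _)
    · simp

lemma exists_round_idx (p0 L : ℕ) (p : ℕ → ℕ) (m : ℕ) (hm : 1 ≤ m)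
    (N : ReluNet p0) (hb : ParamsBounded N) (hL : N.L = L) (hw : N.width = p) :
    ∃ θ : NetIdx L (Pmax L p) m,
      (∀ l i j, l ≤ L → i < p (l + 1) → j < p l →
        |N.W l i j - (idxNet p0 L p m θ).W l i j| ≤ 1 / m) ∧
      (∀ l i, 1 ≤ l → l ≤ L → i < p l →
        |N.v l i - (idxNet p0 L p m θ).v l i| ≤ 1 / m) := by
  have hm' : (0:ℝ) < m := by exact_mod_cast hm
  have round : ∀ w : ℝ, |w| ≤ 1 → ∃ k : ℕ, k < 2 * m + 1 ∧ |w - val01 m k| ≤ 1 / m := by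
    intro w hw1
    have h1 : -(m:ℝ) ≤ w * m := by nlinarith [abs_le.1 hw1]
    have h2 : w * m ≤ m := by nlinarith [abs_le.1 hw1]
    have hge : (-(m:ℤ)) ≤ ⌊w * m⌋ := Int.le_floor.2 (by push_cast; exact h1)
    have hfl : ⌊w * m⌋ ≤ (m:ℤ) := by
      have h3 : ⌊w * m⌋ ≤ ⌊((m:ℤ) : ℝ)⌋ := Int.floor_le_floor (by push_cast; exact h2)
      simpa using h3
    refine ⟨(⌊w * m⌋ + m).toNat, by omega, ?_⟩
    have htn : (((⌊w * m⌋ + m).toNat : ℤ)) = ⌊w * m⌋ + m := Int.toNat_of_nonneg (by omega)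
    have hval : val01 m ((⌊w * m⌋ + m).toNat) = (⌊w * m⌋ : ℝ) / m := by
      rw [val01]
      congr 1
      have hc : (((⌊w * m⌋ + m).toNat : ℕ) : ℝ) = ((⌊w * m⌋ : ℝ) + m) := by
        exact_mod_cast congrArg (fun z : ℤ => (z : ℝ)) htn
      rw [hc]; ring
    rw [hval]
    have hfl1 : (⌊w * m⌋ : ℝ) ≤ w * m := Int.floor_le _
    have hfl2 : w * m - 1 ≤ (⌊w * m⌋ : ℝ) := by
      have := Int.sub_one_lt_floor (w * m)
      linarith
    have hdle : (⌊w * m⌋ : ℝ) / m ≤ w := by rw [div_le_iff₀ hm']; exact hfl1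
    have heq : w - (⌊w * m⌋ : ℝ) / m = (w * m - ⌊w * m⌋) / m := by field_simp
    rw [abs_le]
    constructor
    · have h0 : (0:ℝ) < 1 / m := by positivity
      linarith
    · rw [heq, div_le_div_iff₀ hm' hm']
      nlinarith
  choose kW hkW using fun (l : Fin (L + 1)) (i j : Fin (Pmax L p)) =>
    round (N.W l.1 i.1 j.1) (hb.1 _ _ _)
  choose kv hkv using fun (l : Fin (L + 1)) (i : Fin (Pmax L p)) =>
    round (N.v (l.1 + 1) i.1) (hb.2 _ _)
  refine ⟨(fun l i j => ⟨kW l i j, (hkW l i j).1⟩, fun l i => ⟨kv l i, (hkv l i).1⟩), ?_, ?_⟩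
  · intro l i j hlL hi hj
    have hcond : l < L + 1 ∧ i < Pmax L p ∧ j < Pmax L p :=
      ⟨Nat.lt_succ_of_le hlL, lt_of_lt_of_le hi (le_Pmax L p (Nat.succ_le_succ hlL)),
        lt_of_lt_of_le hj (le_Pmax L p (le_trans hlL (Nat.le_succ L)))⟩
    simp only [idxNet, dif_pos hcond]
    exact (hkW ⟨l, hcond.1⟩ ⟨i, hcond.2.1⟩ ⟨j, hcond.2.2⟩).2
  · intro l i h1l hlL hi
    have hcond : 1 ≤ l ∧ l - 1 < L + 1 ∧ i < Pmax L p :=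
      ⟨h1l, by omega, lt_of_lt_of_le hi (le_Pmax L p (le_trans hlL (Nat.le_succ L)))⟩
    simp only [idxNet, dif_pos hcond]
    have hll : l - 1 + 1 = l := by omega
    have := (hkv ⟨l - 1, hcond.2.1⟩ ⟨i, hcond.2.2⟩).2
    simpa [hll] using this

open Topology

section Prob
variable {Ω : Type} [MeasurableSpace Ω]

lemma integrable_compY (μ : Measure Ω) [IsProbabilityMeasure μ] {α : Type*} [MeasurableSpace α]
    (Z : Ω → α) (hZ : Measurable Z) (f : α → ℝ) (hf : Measurable f)
    (C : ℝ) (hC : ∀ ω, |f (Z ω)| ≤ C) : Integrable (fun ω => f (Z ω)) μ :=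
  Integrable.mono' (integrable_const C) ((hf.comp hZ)).aestronglyMeasurable
    (Filter.Eventually.of_forall fun ω => by rw [Real.norm_eq_abs]; exact hC ω)

lemma slln_compY (μ : Measure Ω) [IsProbabilityMeasure μ]
    (Y : ℕ → Ω → ℝ × (Fin p0 → ℝ))
    (hmeas : ∀ i, Measurable (Y i))
    (hindep : iIndepFun Y μ)
    (hident : ∀ i, μ.map (Y i) = μ.map (Y 0))
    (f : ℝ × (Fin p0 → ℝ) → ℝ) (hf : Measurable f)
    (C : ℝ) (hC : ∀ ω, |f (Y 0 ω)| ≤ C) :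
    ∀ᵐ ω ∂μ, Tendsto (fun n : ℕ => (n:ℝ)⁻¹ * ∑ i ∈ Finset.range n, f (Y i ω))
      atTop (𝓝 (∫ ω', f (Y 0 ω') ∂μ)) := by
  have hint : Integrable (fun ω => f (Y 0 ω)) μ :=
    integrable_compY μ (Y 0) (hmeas 0) f hf C hC
  have hid : ∀ i, IdentDistrib (fun ω => f (Y i ω)) (fun ω => f (Y 0 ω)) μ μ := fun i =>
    IdentDistrib.comp ⟨(hmeas i).aemeasurable, (hmeas 0).aemeasurable, hident i⟩ hf
  have hpind : Pairwise (Function.onFun (IndepFun · · μ) fun i ω => f (Y i ω)) := fun i j hij =>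
    (hindep.indepFun hij).comp hf hf
  have h := strong_law_ae_real (fun i ω => f (Y i ω)) hint hpind hid
  filter_upwards [h] with ω hω
  simpa [div_eq_inv_mul] using hω

/-- step functions used as brackets in `t` -/
def stepF (q : ℝ × Bool) (r : ℝ) : ℝ := if (if q.2 then q.1 ≤ r else q.1 < r) then 1 else 0

lemma stepF_nonneg (q : ℝ × Bool) (r : ℝ) : 0 ≤ stepF q r := by
  unfold stepF; split <;> split <;> norm_num

lemma stepF_le_one (q : ℝ × Bool) (r : ℝ) : stepF q r ≤ 1 := by
  unfold stepF; split <;> split <;> norm_num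

lemma measurable_stepF (q : ℝ × Bool) : Measurable (stepF q) := by
  rcases q with ⟨c, b⟩
  cases b
  · have h : stepF (c, false) = (Set.Ioi c).indicator (fun _ => (1:ℝ)) :=
      funext fun r => by simp [stepF, Set.indicator_apply, Set.mem_Ioi]
    rw [h]; exact measurable_const.indicator measurableSet_Ioi
  · have h : stepF (c, true) = (Set.Ici c).indicator (fun _ => (1:ℝ)) :=
      funext fun r => by simp [stepF, Set.indicator_apply, Set.mem_Ici]
    rw [h]; exact measurable_const.indicator measurableSet_Ici

lemma stepF_true (c r : ℝ) : stepF (c, true) r = if c ≤ r then 1 else 0 := by simp [stepF]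
lemma stepF_false (c r : ℝ) : stepF (c, false) r = if c < r then 1 else 0 := by simp [stepF]

lemma integral_ite_prob (μ : Measure Ω) [IsProbabilityMeasure μ]
    (P : Ω → Prop) [DecidablePred P] (hP : MeasurableSet {ω | P ω}) :
    ∫ ω, (if P ω then (1:ℝ) else 0) ∂μ = (μ {ω | P ω}).toReal := by
  have h : (fun ω => if P ω then (1:ℝ) else 0) = Set.indicator {ω | P ω} 1 :=
    funext fun ω => by simp [Set.indicator_apply, Set.mem_setOf_eq]
  rw [h, integral_indicator_one hP]
  rfl

lemma exists_gap (μ : Measure Ω) [IsProbabilityMeasure μ] (T : Ω → ℝ) (hT : Measurable T)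
    (t0 : ℝ) (ε : ℝ) (hε : 0 < ε) :
    ∃ δ : ℝ, 0 < δ ∧ (μ {ω | t0 - δ < T ω ∧ T ω < t0}).toReal ≤ ε ∧
      (μ {ω | t0 < T ω ∧ T ω < t0 + δ}).toReal ≤ ε := by
  set A : ℕ → Set Ω := fun n =>
    {ω | (t0 - 1/(n+1) < T ω ∧ T ω < t0) ∨ (t0 < T ω ∧ T ω < t0 + 1/(n+1))} with hA
  have hAm : ∀ n, MeasurableSet (A n) := fun n =>
    (((measurableSet_lt measurable_const hT).inter (measurableSet_lt hT measurable_const)).union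
      ((measurableSet_lt measurable_const hT).inter (measurableSet_lt hT measurable_const)))
  have hanti : Antitone A := by
    intro n m hnm ω hω
    have hmn : 1/((m:ℝ)+1) ≤ 1/((n:ℝ)+1) := by
      apply one_div_le_one_div_of_le <;> [positivity; exact_mod_cast Nat.succ_le_succ hnm]
    rcases hω with h | h
    · exact Or.inl ⟨by linarith [h.1], h.2⟩
    · exact Or.inr ⟨h.1, by linarith [h.2]⟩
  have hempty : ⋂ n, A n = ∅ := by
    rw [Set.eq_empty_iff_forall_notMem]
    intro ω hω
    simp only [Set.mem_iInter] at hω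
    rcases lt_trichotomy (T ω) t0 with h | h | h
    · obtain ⟨n, hn⟩ := exists_nat_one_div_lt (show (0:ℝ) < t0 - T ω by linarith)
      rcases hω n with h' | h' <;> [linarith [h'.1]; linarith [h'.1]]
    · rcases hω 0 with h' | h' <;> [linarith [h'.2]; linarith [h'.1]]
    · obtain ⟨n, hn⟩ := exists_nat_one_div_lt (show (0:ℝ) < T ω - t0 by linarith)
      rcases hω n with h' | h' <;> [linarith [h'.2]; linarith [h'.2]]
  have htend : Tendsto (μ ∘ A) atTop (𝓝 0) := by
    have := tendsto_measure_iInter_atTop (fun n => (hAm n).nullMeasurableSet) hanti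
      ⟨0, measure_ne_top μ _⟩
    rwa [hempty, measure_empty] at this
  have hev : ∀ᶠ n in atTop, (μ ∘ A) n < ENNReal.ofReal ε :=
    htend.eventually_lt_const (by simp [hε])
  obtain ⟨n, hn⟩ := hev.exists
  refine ⟨1/(n+1), by positivity, ?_, ?_⟩
  · refine ENNReal.toReal_le_of_le_ofReal hε.le (le_trans (measure_mono ?_) hn.le)
    intro ω hω; exact Or.inl hω
  · refine ENNReal.toReal_le_of_le_ofReal hε.le (le_trans (measure_mono ?_) hn.le)
    intro ω hω; exact Or.inr hω

lemma tcov (μ : Measure Ω) [IsProbabilityMeasure μ] (T : Ω → ℝ) (hT : Measurable T)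
    (τ ε : ℝ) (hε : 0 < ε) :
    ∃ P : Finset ((ℝ × Bool) × (ℝ × Bool)), ∀ t ∈ Set.Icc (0:ℝ) τ, ∃ q ∈ P,
      (∀ r, stepF q.1 r ≤ stepF q.2 r) ∧
      (∀ r, stepF q.1 r ≤ (if t ≤ r then 1 else 0)) ∧
      (∀ r, (if t ≤ r then (1:ℝ) else 0) ≤ stepF q.2 r) ∧
      (∫ ω, (stepF q.2 (T ω) - stepF q.1 (T ω)) ∂μ ≤ ε) := by
  classical
  choose δf hδpos hδ1 hδ2 using fun t0 : ℝ => exists_gap μ T hT t0 ε hε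
  have hcov : Set.Icc (0:ℝ) τ ⊆
      ⋃ t0 ∈ Set.Icc (0:ℝ) τ, Set.Ioo (t0 - δf t0) (t0 + δf t0) := by
    intro t ht
    exact Set.mem_biUnion ht ⟨by linarith [hδpos t], by linarith [hδpos t]⟩
  obtain ⟨b, hbsub, hbfin, hbcov⟩ := isCompact_Icc.elim_finite_subcover_image
    (fun t0 _ => isOpen_Ioo) hcov
  refine ⟨hbfin.toFinset.biUnion (fun t0 =>
    {((t0, true), (t0 - δf t0, false)), ((t0, true), (t0, true)),
      ((t0 + δf t0, true), (t0, false))}), ?_⟩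
  intro t ht
  obtain ⟨t0, ht0b, ht0⟩ := Set.mem_iUnion₂.1 (hbcov ht)
  have hmem : t0 ∈ hbfin.toFinset := hbfin.mem_toFinset.2 ht0b
  obtain ⟨ht1, ht2⟩ := ht0
  rcases lt_trichotomy t t0 with hlt | heq | hgt
  · refine ⟨((t0, true), (t0 - δf t0, false)), Finset.mem_biUnion.2
      ⟨t0, hmem, by simp⟩, ?_, ?_, ?_, ?_⟩
    · intro r; simp only [stepF_true, stepF_false]
      split_ifs with h1 h2 h2 <;> norm_num <;> linarith
    · intro r; simp only [stepF_true, stepF_false]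
      split_ifs with h1 h2 h2 <;> norm_num <;> linarith
    · intro r; simp only [stepF_true, stepF_false]
      split_ifs with h1 h2 h2 <;> norm_num <;> linarith
    · have heqf : (fun ω => stepF (t0 - δf t0, false) (T ω) - stepF (t0, true) (T ω))
          = fun ω => if (t0 - δf t0 < T ω ∧ T ω < t0) then (1:ℝ) else 0 := by
        funext ω
        by_cases h2 : t0 ≤ T ω
        · have h1 : t0 - δf t0 < T ω := by linarith [hδpos t0]
          have h3 : ¬ (T ω < t0) := not_lt.2 h2
          simp [stepF_false, stepF_true, h1, h2, h3]
        · have h3 : T ω < t0 := not_le.1 h2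
          by_cases h1 : t0 - δf t0 < T ω <;> simp [stepF_false, stepF_true, h1, h2, h3]
      have hms : MeasurableSet {ω | t0 - δf t0 < T ω ∧ T ω < t0} :=
        (measurableSet_lt measurable_const hT).inter (measurableSet_lt hT measurable_const)
      rw [heqf, integral_ite_prob μ _ hms]
      exact hδ1 t0
  · refine ⟨((t0, true), (t0, true)), Finset.mem_biUnion.2 ⟨t0, hmem, by simp⟩,
      fun r => le_refl _, ?_, ?_, ?_⟩
    · intro r; simp only [stepF_true, stepF_false]
      split_ifs with h1 h2 h2 <;> norm_num <;> linarith
    · intro r; simp only [stepF_true, stepF_false]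
      split_ifs with h1 h2 h2 <;> norm_num <;> linarith
    · simp [sub_self, hε.le]
  · refine ⟨((t0 + δf t0, true), (t0, false)), Finset.mem_biUnion.2
      ⟨t0, hmem, by simp⟩, ?_, ?_, ?_, ?_⟩
    · intro r; simp only [stepF_true, stepF_false]
      split_ifs with h1 h2 h2 <;> norm_num <;> linarith
    · intro r; simp only [stepF_true, stepF_false]
      split_ifs with h1 h2 h2 <;> norm_num <;> linarith
    · intro r; simp only [stepF_true, stepF_false]
      split_ifs with h1 h2 h2 <;> norm_num <;> linarith
    · have heqf : (fun ω => stepF (t0, false) (T ω) - stepF (t0 + δf t0, true) (T ω))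
          = fun ω => if (t0 < T ω ∧ T ω < t0 + δf t0) then (1:ℝ) else 0 := by
        funext ω
        by_cases h2 : t0 + δf t0 ≤ T ω
        · have h1 : t0 < T ω := by linarith [hδpos t0]
          have h3 : ¬ (T ω < t0 + δf t0) := not_lt.2 h2
          simp [stepF_false, stepF_true, h1, h2, h3]
        · have h3 : T ω < t0 + δf t0 := not_le.1 h2
          by_cases h1 : t0 < T ω <;> simp [stepF_false, stepF_true, h1, h2, h3]
      have hms : MeasurableSet {ω | t0 < T ω ∧ T ω < t0 + δf t0} :=
        (measurableSet_lt measurable_const hT).inter (measurableSet_lt hT measurable_const)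
      rw [heqf, integral_ite_prob μ _ hms]
      exact hδ2 t0

lemma avg_abs_diff (n : ℕ) (a b : ℕ → ℝ) (C : ℝ) (hC : 0 ≤ C) (h : ∀ i, |a i - b i| ≤ C) :
    |(n:ℝ)⁻¹ * ∑ i ∈ Finset.range n, a i - (n:ℝ)⁻¹ * ∑ i ∈ Finset.range n, b i| ≤ C := by
  rcases Nat.eq_zero_or_pos n with rfl | hn
  · simpa using hC
  have hn' : (0:ℝ) < n := by exact_mod_cast hn
  rw [← mul_sub, ← Finset.sum_sub_distrib, abs_mul, abs_of_pos (inv_pos.2 hn')]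
  calc (n:ℝ)⁻¹ * |∑ i ∈ Finset.range n, (a i - b i)|
      ≤ (n:ℝ)⁻¹ * (n * C) := by
        refine mul_le_mul_of_nonneg_left ?_ (inv_pos.2 hn').le
        refine (Finset.abs_sum_le_sum_abs _ _).trans ?_
        refine (Finset.sum_le_sum (fun i _ => h i)).trans ?_
        rw [Finset.sum_const, Finset.card_range, nsmul_eq_mul]
    _ = C := by field_simp

lemma avg_mono (n : ℕ) (a b : ℕ → ℝ) (h : ∀ i, a i ≤ b i) :
    (n:ℝ)⁻¹ * ∑ i ∈ Finset.range n, a i ≤ (n:ℝ)⁻¹ * ∑ i ∈ Finset.range n, b i :=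
  mul_le_mul_of_nonneg_left (Finset.sum_le_sum fun i _ => h i) (by positivity)

lemma eps_lemma {p0 : ℕ} (τ : ℝ) (L : ℕ) (p : ℕ → ℕ) (s : ℕ) (F : ℝ)
    {Ω : Type} [MeasurableSpace Ω] (μ : Measure Ω) [IsProbabilityMeasure μ]
    (Y : ℕ → Ω → ℝ × (Fin p0 → ℝ))
    (hmeas : ∀ i, Measurable (Y i))
    (hindep : iIndepFun Y μ)
    (hident : ∀ i, μ.map (Y i) = μ.map (Y 0))
    (hXcube : ∀ i ω, (Y i ω).2 ∈ cube p0)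
    (ε : ℝ) (hε : 0 < ε) :
    ∀ᵐ ω ∂μ, ∀ᶠ n : ℕ in atTop, ∀ t ∈ Set.Icc (0:ℝ) τ, ∀ g ∈ sparseReluClass p0 L p s F,
      |(n : ℝ)⁻¹ * (∑ i ∈ Finset.range n,
          if t ≤ (Y i ω).1 then Real.exp (g ((Y i ω).2)) else 0) -
        ∫ ω', (if t ≤ (Y 0 ω').1 then Real.exp (g ((Y 0 ω').2)) else 0) ∂μ| ≤ ε := by
  classical
  set B : ℝ := Mb p (L + 1) with hB
  have hB0 : 0 ≤ B := Mb_nonneg p (L + 1)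
  set EB : ℝ := Real.exp (2 * B) with hEB
  have hEB1 : 1 ≤ EB := by
    rw [hEB]; nlinarith [Real.add_one_le_exp (2 * B)]
  have hEB0 : 0 < EB := lt_of_lt_of_le one_pos hEB1
  set C : ℝ := Cd p (L + 1) with hC
  have hC0 : 0 ≤ C := Cd_nonneg p (L + 1)
  -- choose the discretization scale m
  obtain ⟨m, hm⟩ := exists_nat_gt (max 1 (12 * EB * C / ε))
  have hm1 : 1 ≤ m := by
    have h1 : (1:ℝ) < m := lt_of_le_of_lt (le_max_left _ _) hm
    exact_mod_cast h1.le
  have hm' : (0:ℝ) < m := by exact_mod_cast hm1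
  have hmbig : 2 * (EB * (2 * (1 / m * C))) ≤ ε / 3 := by
    have h2 : 12 * EB * C / ε < m := lt_of_le_of_lt (le_max_right _ _) hm
    rw [div_lt_iff₀ hε] at h2
    have : 2 * (EB * (2 * (1 / m * C))) = 4 * EB * C / m := by field_simp; ring
    rw [this, div_le_div_iff₀ hm' (by norm_num : (0:ℝ) < 3)]
    nlinarith
  set ε3 : ℝ := ε / (3 * EB) with hε3def
  have hε3 : 0 < ε3 := by positivity
  -- the t-brackets
  obtain ⟨P, hP⟩ := tcov μ (fun ω => (Y 0 ω).1) (measurable_fst.comp (hmeas 0)) τ ε3 hε3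
  set Pc : Finset (ℝ × Bool) := P.image Prod.fst ∪ P.image Prod.snd with hPc
  -- the discretized networks
  set gfun : NetIdx L (Pmax L p) m → (Fin p0 → ℝ) → ℝ :=
    fun θ x => netEval (idxNet p0 L p m θ) x - netEval (idxNet p0 L p m θ) 0 with hgfun
  have hgmeas : ∀ θ, Measurable (gfun θ) := fun θ =>
    (measurable_netEval _).sub measurable_const
  have hcube1 : ∀ x : Fin p0 → ℝ, x ∈ cube p0 → ∀ i, |x i| ≤ 1 := by
    intro x hx i
    have := hx i
    rw [abs_le]
    exact ⟨by linarith [this.1], this.2⟩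
  have h0cube : ∀ i : Fin p0, |(fun _ : Fin p0 => (0:ℝ)) i| ≤ 1 := fun i => by norm_num
  have hgb : ∀ θ, ∀ x ∈ cube p0, |gfun θ x| ≤ 2 * B := by
    intro θ x hx
    have h1 := netEval_bound (idxNet p0 L p m θ) p (idxNet_bounded p0 L p m hm1 θ) rfl x
      (hcube1 x hx)
    have h2 := netEval_bound (idxNet p0 L p m θ) p (idxNet_bounded p0 L p m hm1 θ) rfl
      (fun _ => 0) h0cube
    calc |gfun θ x| ≤ |netEval (idxNet p0 L p m θ) x| + |netEval (idxNet p0 L p m θ) 0| :=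
          abs_sub _ _
      _ ≤ B + B := add_le_add h1 h2
      _ = 2 * B := by ring
  set fb : NetIdx L (Pmax L p) m → (ℝ × Bool) → (ℝ × (Fin p0 → ℝ)) → ℝ :=
    fun θ c z => stepF c z.1 * Real.exp (gfun θ z.2) with hfb
  have hfbmeas : ∀ θ c, Measurable (fb θ c) := fun θ c =>
    ((measurable_stepF c).comp measurable_fst).mul
      (Real.measurable_exp.comp ((hgmeas θ).comp measurable_snd))
  have hfbbd : ∀ θ c i ω, |fb θ c (Y i ω)| ≤ EB := by
    intro θ c i ω
    rw [hfb]
    simp only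
    rw [abs_mul]
    have h1 : |stepF c (Y i ω).1| ≤ 1 := by
      rw [abs_of_nonneg (stepF_nonneg _ _)]; exact stepF_le_one _ _
    have h2 : |Real.exp (gfun θ (Y i ω).2)| ≤ EB := by
      rw [abs_of_pos (Real.exp_pos _), hEB]
      exact Real.exp_le_exp.2 (le_trans (le_abs_self _) (hgb θ _ (hXcube i ω)))
    calc |stepF c (Y i ω).1| * |Real.exp (gfun θ (Y i ω).2)| ≤ 1 * EB :=
          mul_le_mul h1 h2 (abs_nonneg _) zero_le_one
      _ = EB := one_mul _
  -- the countable family of SLLN statements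
  have aev : ∀ᵐ ω ∂μ, ∀ θ : NetIdx L (Pmax L p) m, ∀ cp : {c // c ∈ Pc},
      Tendsto (fun n : ℕ => (n:ℝ)⁻¹ * ∑ i ∈ Finset.range n, fb θ cp.1 (Y i ω)) atTop
        (𝓝 (∫ ω', fb θ cp.1 (Y 0 ω') ∂μ)) := by
    rw [ae_all_iff]
    intro θ
    rw [ae_all_iff]
    intro cp
    exact slln_compY μ Y hmeas hindep hident (fb θ cp.1) (hfbmeas θ cp.1) EB
      (fun ω => hfbbd θ cp.1 0 ω)
  filter_upwards [aev] with ω hω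
  have hev : ∀ᶠ n : ℕ in atTop, ∀ θ : NetIdx L (Pmax L p) m, ∀ cp : {c // c ∈ Pc},
      |(n:ℝ)⁻¹ * ∑ i ∈ Finset.range n, fb θ cp.1 (Y i ω) -
        ∫ ω', fb θ cp.1 (Y 0 ω') ∂μ| ≤ ε / 3 := by
    rw [eventually_all]
    intro θ
    rw [eventually_all]
    intro cp
    obtain ⟨N0, hN0⟩ := Metric.tendsto_atTop.1 (hω θ cp) (ε/3) (by positivity)
    rw [eventually_atTop]
    exact ⟨N0, fun n hn => by
      have := hN0 n hn
      rw [Real.dist_eq] at this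
      exact this.le⟩
  filter_upwards [hev] with n hn
  intro t ht g hg
  obtain ⟨N, hNL, hNw, hp00, hpL1, hNb, _, hrepr, hgF⟩ := hg
  have hgm : Measurable g := by
    have : g = fun x => netEval N x - netEval N 0 := funext hrepr
    rw [this]
    exact (measurable_netEval _).sub measurable_const
  have hgb2 : ∀ x ∈ cube p0, |g x| ≤ 2 * B := by
    intro x hx
    rw [hrepr x]
    have h1 := netEval_bound N p hNb hNw x (hcube1 x hx)
    have h2 := netEval_bound N p hNb hNw (fun _ => 0) h0cube
    rw [hNL] at h1 h2
    calc |netEval N x - netEval N 0| ≤ |netEval N x| + |netEval N 0| := abs_sub _ _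
      _ ≤ B + B := add_le_add h1 h2
      _ = 2 * B := by ring
  -- round the network
  obtain ⟨θ, hWc, hvc⟩ := exists_round_idx p0 L p m hm1 N hNb hNL hNw
  have hpL1' : 0 < p (L + 1) := by rw [hpL1]; norm_num
  have hclose : ∀ x ∈ cube p0, |g x - gfun θ x| ≤ 2 * (1 / m * C) := by
    intro x hx
    rw [hrepr x]
    have h1 := netEval_diff N (idxNet p0 L p m θ) p L (1/m) (by positivity) hNb
      (idxNet_bounded p0 L p m hm1 θ) hNL rfl hNw rfl hpL1' hWc hvc x (hcube1 x hx)
    have h2 := netEval_diff N (idxNet p0 L p m θ) p L (1/m) (by positivity) hNb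
      (idxNet_bounded p0 L p m hm1 θ) hNL rfl hNw rfl hpL1' hWc hvc (fun _ => 0) h0cube
    have e : netEval N x - netEval N 0 - gfun θ x
        = (netEval N x - netEval (idxNet p0 L p m θ) x)
          - (netEval N 0 - netEval (idxNet p0 L p m θ) 0) := by
      rw [hgfun]; ring
    rw [e]
    calc |(netEval N x - netEval (idxNet p0 L p m θ) x)
          - (netEval N 0 - netEval (idxNet p0 L p m θ) 0)|
        ≤ |netEval N x - netEval (idxNet p0 L p m θ) x|
          + |netEval N 0 - netEval (idxNet p0 L p m θ) 0| := abs_sub _ _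
      _ ≤ 1/m * C + 1/m * C := add_le_add h1 h2
      _ = 2 * (1 / m * C) := by ring
  -- the two functions
  set ff : ℝ × (Fin p0 → ℝ) → ℝ := fun z => if t ≤ z.1 then Real.exp (g z.2) else 0 with hff
  set fθ : ℝ × (Fin p0 → ℝ) → ℝ :=
    fun z => if t ≤ z.1 then Real.exp (gfun θ z.2) else 0 with hfθ
  set η : ℝ := EB * (2 * (1 / m * C)) with hη
  have hη0 : 0 ≤ η := by positivity
  have hsd : ∀ i ω'', |ff (Y i ω'') - fθ (Y i ω'')| ≤ η := by
    intro i ω''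
    rw [hff, hfθ]
    simp only
    split_ifs with h1
    · refine (exp_abs_sub_le (hgb2 _ (hXcube i ω'')) (hgb θ _ (hXcube i ω''))).trans ?_
      rw [hη, hEB]
      exact mul_le_mul_of_nonneg_left (hclose _ (hXcube i ω'')) (Real.exp_pos _).le
    · simpa using hη0
  have hffbd : ∀ i ω'', |ff (Y i ω'')| ≤ EB := by
    intro i ω''
    rw [hff]
    simp only
    split_ifs with h1
    · rw [abs_of_pos (Real.exp_pos _), hEB]
      exact Real.exp_le_exp.2 (le_trans (le_abs_self _) (hgb2 _ (hXcube i ω'')))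
    · simpa using hEB0.le
  have hfθbd : ∀ i ω'', |fθ (Y i ω'')| ≤ EB := by
    intro i ω''
    rw [hfθ]
    simp only
    split_ifs with h1
    · rw [abs_of_pos (Real.exp_pos _), hEB]
      exact Real.exp_le_exp.2 (le_trans (le_abs_self _) (hgb θ _ (hXcube i ω'')))
    · simpa using hEB0.le
  have hffmeas : Measurable ff := by
    rw [hff]
    exact Measurable.ite (measurableSet_le measurable_const measurable_fst)
      (Real.measurable_exp.comp (hgm.comp measurable_snd)) measurable_const
  have hfθmeas : Measurable fθ := by
    rw [hfθ]
    exact Measurable.ite (measurableSet_le measurable_const measurable_fst)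
      (Real.measurable_exp.comp ((hgmeas θ).comp measurable_snd)) measurable_const
  have hintff : Integrable (fun ω' => ff (Y 0 ω')) μ :=
    integrable_compY μ (Y 0) (hmeas 0) ff hffmeas EB (hffbd 0)
  have hintfθ : Integrable (fun ω' => fθ (Y 0 ω')) μ :=
    integrable_compY μ (Y 0) (hmeas 0) fθ hfθmeas EB (hfθbd 0)
  -- brackets for t
  obtain ⟨q, hqP, h0, h1, h2, h3⟩ := hP t ht
  have hq1Pc : q.1 ∈ Pc := Finset.mem_union_left _ (Finset.mem_image_of_mem Prod.fst hqP)
  have hq2Pc : q.2 ∈ Pc := Finset.mem_union_right _ (Finset.mem_image_of_mem Prod.snd hqP)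
  have hintL : Integrable (fun ω' => fb θ q.1 (Y 0 ω')) μ :=
    integrable_compY μ (Y 0) (hmeas 0) (fb θ q.1) (hfbmeas θ q.1) EB (hfbbd θ q.1 0)
  have hintU : Integrable (fun ω' => fb θ q.2 (Y 0 ω')) μ :=
    integrable_compY μ (Y 0) (hmeas 0) (fb θ q.2) (hfbmeas θ q.2) EB (hfbbd θ q.2 0)
  -- pointwise sandwich
  have hfθeq : ∀ z : ℝ × (Fin p0 → ℝ),
      fθ z = (if t ≤ z.1 then (1:ℝ) else 0) * Real.exp (gfun θ z.2) := by
    intro z; by_cases h : t ≤ z.1 <;> simp [hfθ, h]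
  have hsandL : ∀ z, fb θ q.1 z ≤ fθ z := by
    intro z
    rw [hfθeq z, hfb]
    exact mul_le_mul_of_nonneg_right (h1 z.1) (Real.exp_pos _).le
  have hsandU : ∀ z, fθ z ≤ fb θ q.2 z := by
    intro z
    rw [hfθeq z, hfb]
    exact mul_le_mul_of_nonneg_right (h2 z.1) (Real.exp_pos _).le
  -- mean gap
  have hstepint : ∀ c : ℝ × Bool, Integrable (fun ω' => stepF c ((Y 0 ω').1)) μ := by
    intro c
    refine integrable_compY μ (Y 0) (hmeas 0) (fun z => stepF c z.1)
      ((measurable_stepF c).comp measurable_fst) 1 (fun ω' => ?_)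
    rw [abs_of_nonneg (stepF_nonneg _ _)]; exact stepF_le_one _ _
  have hgapmean : (∫ ω', fb θ q.2 (Y 0 ω') ∂μ) - (∫ ω', fb θ q.1 (Y 0 ω') ∂μ) ≤ ε / 3 := by
    rw [← integral_sub hintU hintL]
    have step1 : ∫ ω', (fb θ q.2 (Y 0 ω') - fb θ q.1 (Y 0 ω')) ∂μ
        ≤ ∫ ω', EB * (stepF q.2 ((Y 0 ω').1) - stepF q.1 ((Y 0 ω').1)) ∂μ := by
      refine integral_mono (hintU.sub hintL) (((hstepint q.2).sub (hstepint q.1)).const_mul EB) ?_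
      intro ω'
      rw [hfb]
      simp only
      have hdiff0 : 0 ≤ stepF q.2 ((Y 0 ω').1) - stepF q.1 ((Y 0 ω').1) :=
        sub_nonneg.2 (h0 _)
      have hexp : Real.exp (gfun θ ((Y 0 ω').2)) ≤ EB := by
        rw [hEB]
        exact Real.exp_le_exp.2 (le_trans (le_abs_self _) (hgb θ _ (hXcube 0 ω')))
      calc stepF q.2 ((Y 0 ω').1) * Real.exp (gfun θ ((Y 0 ω').2))
            - stepF q.1 ((Y 0 ω').1) * Real.exp (gfun θ ((Y 0 ω').2))
          = (stepF q.2 ((Y 0 ω').1) - stepF q.1 ((Y 0 ω').1))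
            * Real.exp (gfun θ ((Y 0 ω').2)) := by ring
        _ ≤ (stepF q.2 ((Y 0 ω').1) - stepF q.1 ((Y 0 ω').1)) * EB :=
            mul_le_mul_of_nonneg_left hexp hdiff0
        _ = EB * (stepF q.2 ((Y 0 ω').1) - stepF q.1 ((Y 0 ω').1)) := by ring
    refine step1.trans ?_
    rw [integral_const_mul]
    calc EB * ∫ ω', (stepF q.2 ((Y 0 ω').1) - stepF q.1 ((Y 0 ω').1)) ∂μ
        ≤ EB * ε3 := mul_le_mul_of_nonneg_left h3 hEB0.le
      _ = ε / 3 := by rw [hε3def]; field_simp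
  -- eventual bounds for the bracket endpoints
  have hnL := hn θ ⟨q.1, hq1Pc⟩
  have hnU := hn θ ⟨q.2, hq2Pc⟩
  -- monotonicity of empirical averages and means
  have hempL : (n:ℝ)⁻¹ * ∑ i ∈ Finset.range n, fb θ q.1 (Y i ω)
      ≤ (n:ℝ)⁻¹ * ∑ i ∈ Finset.range n, fθ (Y i ω) :=
    avg_mono n _ _ (fun i => hsandL (Y i ω))
  have hempU : (n:ℝ)⁻¹ * ∑ i ∈ Finset.range n, fθ (Y i ω)
      ≤ (n:ℝ)⁻¹ * ∑ i ∈ Finset.range n, fb θ q.2 (Y i ω) :=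
    avg_mono n _ _ (fun i => hsandU (Y i ω))
  have hmeanL : ∫ ω', fb θ q.1 (Y 0 ω') ∂μ ≤ ∫ ω', fθ (Y 0 ω') ∂μ :=
    integral_mono hintL hintfθ (fun ω' => hsandL (Y 0 ω'))
  have hmeanU : ∫ ω', fθ (Y 0 ω') ∂μ ≤ ∫ ω', fb θ q.2 (Y 0 ω') ∂μ :=
    integral_mono hintfθ hintU (fun ω' => hsandU (Y 0 ω'))
  -- |Emp fθ − Mean fθ| ≤ 2ε/3
  have habsL := abs_le.1 hnL
  have habsU := abs_le.1 hnU
  have hmid : |(n:ℝ)⁻¹ * ∑ i ∈ Finset.range n, fθ (Y i ω) - ∫ ω', fθ (Y 0 ω') ∂μ|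
      ≤ 2 * ε / 3 := by
    rw [abs_le]
    constructor
    · have : -(2 * ε / 3) ≤ ((n:ℝ)⁻¹ * ∑ i ∈ Finset.range n, fb θ q.1 (Y i ω)
          - ∫ ω', fb θ q.1 (Y 0 ω') ∂μ) - ε / 3 := by
        simp only at habsL
        linarith [habsL.1]
      refine this.trans ?_
      have := hgapmean
      linarith [hempL, hmeanU]
    · have : ((n:ℝ)⁻¹ * ∑ i ∈ Finset.range n, fb θ q.2 (Y i ω)
          - ∫ ω', fb θ q.2 (Y 0 ω') ∂μ) + ε / 3 ≤ 2 * ε / 3 := by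
        simp only at habsU
        linarith [habsU.2]
      refine le_trans ?_ this
      linarith [hempU, hmeanL, hgapmean]
  -- perturbation from g to gθ
  have hempdiff : |(n:ℝ)⁻¹ * ∑ i ∈ Finset.range n, ff (Y i ω)
      - (n:ℝ)⁻¹ * ∑ i ∈ Finset.range n, fθ (Y i ω)| ≤ η :=
    avg_abs_diff n _ _ η hη0 (fun i => hsd i ω)
  have hmeandiff : |(∫ ω', ff (Y 0 ω') ∂μ) - ∫ ω', fθ (Y 0 ω') ∂μ| ≤ η := by
    rw [← integral_sub hintff hintfθ]
    calc |∫ ω', (ff (Y 0 ω') - fθ (Y 0 ω')) ∂μ| ≤ ∫ ω', |ff (Y 0 ω') - fθ (Y 0 ω')| ∂μ := by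
          simpa [Real.norm_eq_abs] using
            norm_integral_le_integral_norm (fun ω' => ff (Y 0 ω') - fθ (Y 0 ω')) (μ := μ)
      _ ≤ ∫ _ω', η ∂μ := integral_mono (hintff.sub hintfθ).abs (integrable_const η)
          (fun ω' => hsd 0 ω')
      _ = η := by simp
  -- put everything together
  have hfinal : |(n:ℝ)⁻¹ * ∑ i ∈ Finset.range n, ff (Y i ω) - ∫ ω', ff (Y 0 ω') ∂μ|
      ≤ η + (2 * ε / 3 + η) := by
    calc |(n:ℝ)⁻¹ * ∑ i ∈ Finset.range n, ff (Y i ω) - ∫ ω', ff (Y 0 ω') ∂μ|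
        ≤ |(n:ℝ)⁻¹ * ∑ i ∈ Finset.range n, ff (Y i ω)
            - (n:ℝ)⁻¹ * ∑ i ∈ Finset.range n, fθ (Y i ω)|
          + |(n:ℝ)⁻¹ * ∑ i ∈ Finset.range n, fθ (Y i ω) - ∫ ω', ff (Y 0 ω') ∂μ| := by
            have e : (n:ℝ)⁻¹ * ∑ i ∈ Finset.range n, ff (Y i ω) - ∫ ω', ff (Y 0 ω') ∂μ
                = ((n:ℝ)⁻¹ * ∑ i ∈ Finset.range n, ff (Y i ω)
                  - (n:ℝ)⁻¹ * ∑ i ∈ Finset.range n, fθ (Y i ω))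
                  + ((n:ℝ)⁻¹ * ∑ i ∈ Finset.range n, fθ (Y i ω)
                    - ∫ ω', ff (Y 0 ω') ∂μ) := by ring
            rw [e]
            exact abs_add_le _ _
      _ ≤ η + (2 * ε / 3 + η) := by
          refine add_le_add hempdiff ?_
          calc |(n:ℝ)⁻¹ * ∑ i ∈ Finset.range n, fθ (Y i ω) - ∫ ω', ff (Y 0 ω') ∂μ|
              ≤ |(n:ℝ)⁻¹ * ∑ i ∈ Finset.range n, fθ (Y i ω) - ∫ ω', fθ (Y 0 ω') ∂μ|
                + |(∫ ω', fθ (Y 0 ω') ∂μ) - ∫ ω', ff (Y 0 ω') ∂μ| := by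
                  have e : (n:ℝ)⁻¹ * ∑ i ∈ Finset.range n, fθ (Y i ω) - ∫ ω', ff (Y 0 ω') ∂μ
                      = ((n:ℝ)⁻¹ * ∑ i ∈ Finset.range n, fθ (Y i ω)
                        - ∫ ω', fθ (Y 0 ω') ∂μ)
                        + ((∫ ω', fθ (Y 0 ω') ∂μ) - ∫ ω', ff (Y 0 ω') ∂μ) := by ring
                  rw [e]
                  exact abs_add_le _ _
            _ ≤ 2 * ε / 3 + η := add_le_add hmid (by rwa [abs_sub_comm] at hmeandiff)
  refine hfinal.trans ?_
  have : 2 * η ≤ ε / 3 := by rw [hη]; exact hmbig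
  linarith

end Prob

end CoxDNN

open CoxDNN

/-- Fix `τ > 0` and a sparse ReLU class `F(L,p,s,F)` on `[0,1]^{p0}`.
For an i.i.d. sequence `(T_i, X_i)` with `T_i ≥ 0` and `X_i ∈ [0,1]^{p0}`, letting
`S_n⁽⁰⁾(t;g) = n⁻¹ Σ_{i<n} 1{T_i ≥ t} exp(g(X_i))` and
`S⁽⁰⁾(t;g) = E[1{T ≥ t} exp(g(X))]`, we have
`sup_{t ∈ [0,τ]} sup_{g ∈ F(L,p,s,F)} |S_n⁽⁰⁾(t;g) − S⁽⁰⁾(t;g)| → 0` almost surely. -/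
theorem stmt12
    (τ : ℝ) (hτ : 0 < τ) (p0 L : ℕ) (p : ℕ → ℕ) (s : ℕ) (F : ℝ) (hF : 0 < F)
    {Ω : Type} [MeasurableSpace Ω] (μ : Measure Ω) [IsProbabilityMeasure μ]
    (Y : ℕ → Ω → ℝ × (Fin p0 → ℝ))
    (hmeas : ∀ i, Measurable (Y i))
    (hindep : iIndepFun Y μ)
    (hident : ∀ i, μ.map (Y i) = μ.map (Y 0))
    (hTnn : ∀ i ω, 0 ≤ (Y i ω).1)
    (hXcube : ∀ i ω, (Y i ω).2 ∈ cube p0) :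
    ∀ᵐ ω ∂μ,
      Tendsto
        (fun n : ℕ =>
          ⨆ t : Set.Icc (0 : ℝ) τ, ⨆ g : sparseReluClass p0 L p s F,
            |(n : ℝ)⁻¹ *
                (∑ i ∈ Finset.range n,
                  if (t : ℝ) ≤ (Y i ω).1 then Real.exp (g.1 ((Y i ω).2)) else 0) -
              ∫ ω', (if (t : ℝ) ≤ (Y 0 ω').1 then Real.exp (g.1 ((Y 0 ω').2)) else 0) ∂μ|)
        atTop (nhds 0) := by
  have key : ∀ᵐ ω ∂μ, ∀ k : ℕ, ∀ᶠ n : ℕ in atTop, ∀ t ∈ Set.Icc (0:ℝ) τ,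
      ∀ g ∈ sparseReluClass p0 L p s F,
      |(n : ℝ)⁻¹ * (∑ i ∈ Finset.range n,
          if t ≤ (Y i ω).1 then Real.exp (g ((Y i ω).2)) else 0) -
        ∫ ω', (if t ≤ (Y 0 ω').1 then Real.exp (g ((Y 0 ω').2)) else 0) ∂μ|
        ≤ 1 / ((k:ℝ) + 1) := by
    rw [ae_all_iff]
    intro k
    exact eps_lemma τ L p s F μ Y hmeas hindep hident hXcube (1/((k:ℝ)+1)) (by positivity)
  filter_upwards [key] with ω hω
  refine tendsto_order.2 ⟨?_, ?_⟩
  · intro a ha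
    refine Filter.Eventually.of_forall (fun n => lt_of_lt_of_le ha ?_)
    exact Real.iSup_nonneg fun t => Real.iSup_nonneg fun g => abs_nonneg _
  · intro a ha
    obtain ⟨k, hk⟩ := exists_nat_one_div_lt ha
    filter_upwards [hω k] with n hn
    refine lt_of_le_of_lt ?_ hk
    refine Real.iSup_le (fun t => Real.iSup_le (fun g => hn t.1 t.2 g.1 g.2) (by positivity))
      (by positivity)
end
end

section
/- (Covering number bound for sparse ReLU network classes.) There exists an absolute constant C > 0 such that for every depth L ≥ 1, width vector p = (p0,...,p_{L+1}) with p_{L+1} = 1, sparsity s ≥ 1, envelope F > 0, and every δ ∈ (0,1], the class F(L,p,s,F) of centered s-sparse ReLU networks on [0,1]^{p0} admits a δ-net in the sup norm ‖·‖∞ on [0,1]^{p0} of cardinality N satisfying log N ≤ (s+1) · log( C δ^{−1} (L+1) V² ), where V = Π_{l=0}^{L+1} (p_l + 1). -/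
/-!
# Statement 13 (Covering number bound for sparse ReLU network classes)

There is an absolute constant `C > 0` such that for every architecture the class
`F(L,p,s,F)` admits a sup-norm `δ`-net of cardinality `N` with
`log N ≤ (s+1) log(C δ⁻¹ (L+1) V²)`, `V = Π_{l=0}^{L+1} (p_l + 1)`.
-/

open Filter

noncomputable section

open CoxDNN

namespace Stmt13Aux

open Finset

/-! ### Rounding to the grid -/

def rM (M : ℕ) (t : ℝ) : ℤ := ⌊t * M + 1/2⌋

lemma rM_zero (M : ℕ) : rM M 0 = 0 := by
  simp only [rM, zero_mul, zero_add]
  norm_num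

lemma rM_le (M : ℕ) {t : ℝ} (ht : |t| ≤ 1) : rM M t ≤ M := by
  have h1 : t ≤ 1 := (abs_le.1 ht).2
  have hM : (0:ℝ) ≤ M := Nat.cast_nonneg M
  have : rM M t < (M:ℤ) + 1 := by
    apply Int.floor_lt.2
    push_cast
    nlinarith
  omega

lemma le_rM (M : ℕ) {t : ℝ} (ht : |t| ≤ 1) : -(M:ℤ) ≤ rM M t := by
  have h1 : -1 ≤ t := (abs_le.1 ht).1
  have hM : (0:ℝ) ≤ M := Nat.cast_nonneg M
  apply Int.le_floor.2
  push_cast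
  nlinarith

lemma rM_div_abs_le (M : ℕ) (hM : 1 ≤ M) {t : ℝ} (ht : |t| ≤ 1) :
    |(rM M t : ℝ) / M| ≤ 1 := by
  have hM0 : (0:ℝ) < M := by exact_mod_cast hM
  rw [abs_div, abs_of_pos hM0, div_le_one hM0]
  have h : |rM M t| ≤ (M:ℤ) := abs_le.2 ⟨le_rM M ht, rM_le M ht⟩
  calc |(rM M t : ℝ)| = ((|rM M t| : ℤ) : ℝ) := by push_cast; rfl
    _ ≤ (M:ℝ) := by exact_mod_cast h

lemma rM_div_close (M : ℕ) (hM : 1 ≤ M) (t : ℝ) :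
    |(rM M t : ℝ) / M - t| ≤ 1 / (2 * M) := by
  have hM0 : (0:ℝ) < M := by exact_mod_cast hM
  have hfl : ((rM M t : ℤ) : ℝ) ≤ t * M + 1/2 := Int.floor_le _
  have hfg : t * M + 1/2 - 1 < ((rM M t : ℤ) : ℝ) := Int.sub_one_lt_floor _
  have heq : (rM M t : ℝ) / M - t = ((rM M t : ℝ) - t * M) / M := by
    field_simp
  rw [heq, abs_div, abs_of_pos hM0]
  have h2 : |(rM M t : ℝ) - t * M| ≤ 1/2 := abs_le.2 ⟨by linarith, by linarith⟩
  calc |(rM M t : ℝ) - t * M| / M ≤ (1/2) / M := by gcongr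
    _ = 1 / (2 * M) := by ring

/-! ### Codes for sparse assignments -/

def codeOf {ι : Type*} [DecidableEq ι] (s : ℕ) (S : Finset ι) (h : S.card ≤ s) (val : ι → ℤ) :
    Fin s → Option (ι × ℤ) := fun k =>
  if hk : ∃ a : {a // a ∈ S}, Fin.castLE h (S.equivFin a) = k then
    some (hk.choose.1, val hk.choose.1)
  else none

lemma codeOf_cases {ι : Type*} [DecidableEq ι] (s : ℕ) (S : Finset ι) (h : S.card ≤ s)
    (val : ι → ℤ) (k : Fin s) :
    codeOf s S h val k = none ∨ ∃ a ∈ S, codeOf s S h val k = some (a, val a) := by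
  unfold codeOf
  split_ifs with hk
  · exact Or.inr ⟨hk.choose.1, hk.choose.2, rfl⟩
  · exact Or.inl rfl

lemma codeOf_sum {ι : Type*} [DecidableEq ι] (s : ℕ) (S : Finset ι) (h : S.card ≤ s)
    (val : ι → ℤ) (f : Option (ι × ℤ) → ℝ) (a : ι) (h0 : f none = 0)
    (hz : ∀ b z, b ≠ a → f (some (b, z)) = 0) :
    ∑ k : Fin s, f (codeOf s S h val k) =
      if a ∈ S then f (some (a, val a)) else 0 := by
  set e : {a // a ∈ S} → Fin s := fun b => Fin.castLE h (S.equivFin b) with he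
  have he_inj : Function.Injective e := by
    intro b₁ b₂ hb
    exact S.equivFin.injective (Fin.castLE_injective h hb)
  by_cases ha : a ∈ S
  · rw [if_pos ha]
    rw [Fintype.sum_eq_single (e ⟨a, ha⟩)]
    · have hk : ∃ b : {a // a ∈ S}, e b = e ⟨a, ha⟩ := ⟨⟨a, ha⟩, rfl⟩
      have : codeOf s S h val (e ⟨a, ha⟩) = some (hk.choose.1, val hk.choose.1) :=
        dif_pos hk
      rw [this]
      have hch : hk.choose = ⟨a, ha⟩ := he_inj hk.choose_spec
      rw [hch]
    · intro k hk
      unfold codeOf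
      split_ifs with hke
      · apply hz
        intro heq
        apply hk
        have : hke.choose = ⟨a, ha⟩ := Subtype.ext heq
        rw [← hke.choose_spec, this]
      · exact h0
  · rw [if_neg ha]
    apply Finset.sum_eq_zero
    intro k _
    unfold codeOf
    split_ifs with hke
    · apply hz
      intro heq
      exact ha (heq ▸ hke.choose.2)
    · exact h0

/-! ### Bounds on network outputs -/

lemma one_le_B (p : ℕ → ℕ) (l : ℕ) : (1:ℝ) ≤ ∏ k ∈ range l, ((p k : ℝ) + 1) := by
  have := Finset.prod_le_prod (s := range l) (f := fun _ => (1:ℝ)) (g := fun k => ((p k : ℝ) + 1))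
    (fun _ _ => zero_le_one)
    (fun k _ => by have := Nat.cast_nonneg (α := ℝ) (p k); show (1:ℝ) ≤ (p k : ℝ) + 1; linarith)
  simpa using this

lemma hidden_bound {p0 : ℕ} (N : ReluNet p0) (p : ℕ → ℕ) (hw : N.width = p)
    (hW : ∀ l i j, |N.W l i j| ≤ 1) (hv : ∀ l i, |N.v l i| ≤ 1)
    (x : Fin p0 → ℝ) (hx : x ∈ cube p0) :
    ∀ l j, |hiddenOut N x l j| ≤ ∏ k ∈ range l, ((p k : ℝ) + 1) := by
  intro l
  induction l with
  | zero =>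
    intro j
    simp only [hiddenOut, range_zero, prod_empty]
    split
    · next hj => exact abs_le.2 ⟨by linarith [(hx ⟨j, hj⟩).1], (hx ⟨j, hj⟩).2⟩
    · simp
  | succ l ih =>
    intro i
    have hB1 : (1:ℝ) ≤ ∏ k ∈ range l, ((p k : ℝ) + 1) := one_le_B p l
    have key : |hiddenOut N x (l+1) i| ≤
        |(∑ j ∈ Finset.range (N.width l), N.W l i j * hiddenOut N x l j) - N.v (l + 1) i| := by
      have h1 : hiddenOut N x (l+1) i =
          max ((∑ j ∈ Finset.range (N.width l), N.W l i j * hiddenOut N x l j) - N.v (l + 1) i) 0 := rfl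
      rw [h1, abs_of_nonneg (le_max_right _ _)]
      exact max_le (le_abs_self _) (abs_nonneg _)
    have hsum : |∑ j ∈ Finset.range (N.width l), N.W l i j * hiddenOut N x l j| ≤
        (p l : ℝ) * ∏ k ∈ range l, ((p k : ℝ) + 1) := by
      calc |∑ j ∈ Finset.range (N.width l), N.W l i j * hiddenOut N x l j|
          ≤ ∑ j ∈ Finset.range (N.width l), |N.W l i j * hiddenOut N x l j| :=
            Finset.abs_sum_le_sum_abs _ _
        _ ≤ ∑ _j ∈ Finset.range (N.width l), ∏ k ∈ range l, ((p k : ℝ) + 1) := by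
            apply Finset.sum_le_sum
            intro j _
            rw [abs_mul]
            calc |N.W l i j| * |hiddenOut N x l j| ≤ 1 * (∏ k ∈ range l, ((p k : ℝ) + 1)) := by
                  apply mul_le_mul (hW l i j) (ih j) (abs_nonneg _) zero_le_one
              _ = ∏ k ∈ range l, ((p k : ℝ) + 1) := one_mul _
        _ = (p l : ℝ) * ∏ k ∈ range l, ((p k : ℝ) + 1) := by
            rw [Finset.sum_const, card_range, nsmul_eq_mul, hw]
    calc |hiddenOut N x (l+1) i|
        ≤ |(∑ j ∈ Finset.range (N.width l), N.W l i j * hiddenOut N x l j)| + |N.v (l + 1) i| := by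
          refine key.trans (abs_sub _ _)
      _ ≤ (p l : ℝ) * (∏ k ∈ range l, ((p k : ℝ) + 1)) + 1 := add_le_add hsum (hv _ _)
      _ ≤ ((p l : ℝ) + 1) * ∏ k ∈ range l, ((p k : ℝ) + 1) := by nlinarith
      _ = ∏ k ∈ range (l+1), ((p k : ℝ) + 1) := by rw [prod_range_succ]; ring

lemma hidden_close {p0 : ℕ} (N N' : ReluNet p0) (p : ℕ → ℕ) (L0 : ℕ)
    (hw : N.width = p) (hw' : N'.width = p) (ε : ℝ) (hε : 0 ≤ ε)
    (hW : ∀ l i j, |N.W l i j| ≤ 1) (hv : ∀ l i, |N.v l i| ≤ 1)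
    (hW' : ∀ l i j, |N'.W l i j| ≤ 1)
    (hclW : ∀ l, l < L0 → ∀ i, i < p (l+1) → ∀ j, j < p l → |N.W l i j - N'.W l i j| ≤ ε)
    (hclv : ∀ l, l < L0 → ∀ i, i < p (l+1) → |N.v (l+1) i - N'.v (l+1) i| ≤ ε)
    (x : Fin p0 → ℝ) (hx : x ∈ cube p0) :
    ∀ l, l ≤ L0 → ∀ i, i < p l →
      |hiddenOut N x l i - hiddenOut N' x l i| ≤ ε * l * ∏ k ∈ range l, ((p k : ℝ) + 1) := by
  intro l
  induction l with
  | zero =>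
    intro _ i _
    have h0 : hiddenOut N x 0 i = hiddenOut N' x 0 i := rfl
    rw [h0]
    simp
  | succ l ih =>
    intro hlL i hi
    have hlL' : l ≤ L0 := Nat.le_of_succ_le hlL
    have hlL'' : l < L0 := hlL
    have hB1 : (1:ℝ) ≤ ∏ k ∈ range l, ((p k : ℝ) + 1) := one_le_B p l
    set B : ℝ := ∏ k ∈ range l, ((p k : ℝ) + 1) with hBdef
    have key : |hiddenOut N x (l+1) i - hiddenOut N' x (l+1) i| ≤
        |((∑ j ∈ Finset.range (N.width l), N.W l i j * hiddenOut N x l j) - N.v (l + 1) i) -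
         ((∑ j ∈ Finset.range (N'.width l), N'.W l i j * hiddenOut N' x l j) - N'.v (l + 1) i)| := by
      have e1 : hiddenOut N x (l+1) i =
          max ((∑ j ∈ Finset.range (N.width l), N.W l i j * hiddenOut N x l j) - N.v (l + 1) i) 0 := rfl
      have e2 : hiddenOut N' x (l+1) i =
          max ((∑ j ∈ Finset.range (N'.width l), N'.W l i j * hiddenOut N' x l j) - N'.v (l + 1) i) 0 := rfl
      rw [e1, e2]
      exact abs_max_sub_max_le_abs _ _ _
    have hterm : ∀ j, j < p l →
        |N.W l i j * hiddenOut N x l j - N'.W l i j * hiddenOut N' x l j| ≤ ε * B + ε * l * B := by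
      intro j hj
      have hdecomp : N.W l i j * hiddenOut N x l j - N'.W l i j * hiddenOut N' x l j =
          (N.W l i j - N'.W l i j) * hiddenOut N x l j +
          N'.W l i j * (hiddenOut N x l j - hiddenOut N' x l j) := by ring
      rw [hdecomp]
      calc |(N.W l i j - N'.W l i j) * hiddenOut N x l j +
          N'.W l i j * (hiddenOut N x l j - hiddenOut N' x l j)|
          ≤ |(N.W l i j - N'.W l i j) * hiddenOut N x l j| +
            |N'.W l i j * (hiddenOut N x l j - hiddenOut N' x l j)| := abs_add_le _ _
        _ ≤ ε * B + 1 * (ε * l * B) := by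
            rw [abs_mul, abs_mul]
            apply add_le_add
            · exact mul_le_mul (hclW l hlL'' i hi j hj) (hidden_bound N p hw hW hv x hx l j)
                (abs_nonneg _) hε
            · exact mul_le_mul (hW' l i j) (ih hlL' j hj) (abs_nonneg _) zero_le_one
        _ = ε * B + ε * l * B := by ring
    have hsum : |∑ j ∈ Finset.range (p l), (N.W l i j * hiddenOut N x l j -
          N'.W l i j * hiddenOut N' x l j)| ≤ (p l : ℝ) * (ε * B + ε * l * B) := by
      calc |∑ j ∈ Finset.range (p l), (N.W l i j * hiddenOut N x l j -
            N'.W l i j * hiddenOut N' x l j)|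
          ≤ ∑ j ∈ Finset.range (p l), |N.W l i j * hiddenOut N x l j -
            N'.W l i j * hiddenOut N' x l j| := Finset.abs_sum_le_sum_abs _ _
        _ ≤ ∑ _j ∈ Finset.range (p l), (ε * B + ε * l * B) :=
            Finset.sum_le_sum (fun j hj => hterm j (Finset.mem_range.1 hj))
        _ = (p l : ℝ) * (ε * B + ε * l * B) := by
            rw [Finset.sum_const, card_range, nsmul_eq_mul]
    calc |hiddenOut N x (l+1) i - hiddenOut N' x (l+1) i|
        ≤ |((∑ j ∈ Finset.range (N.width l), N.W l i j * hiddenOut N x l j) - N.v (l + 1) i) -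
           ((∑ j ∈ Finset.range (N'.width l), N'.W l i j * hiddenOut N' x l j) - N'.v (l + 1) i)| := key
      _ ≤ |∑ j ∈ Finset.range (p l), (N.W l i j * hiddenOut N x l j -
            N'.W l i j * hiddenOut N' x l j)| + |N.v (l+1) i - N'.v (l+1) i| := by
          rw [hw, hw']
          have : ((∑ j ∈ Finset.range (p l), N.W l i j * hiddenOut N x l j) - N.v (l + 1) i) -
              ((∑ j ∈ Finset.range (p l), N'.W l i j * hiddenOut N' x l j) - N'.v (l + 1) i) =
              (∑ j ∈ Finset.range (p l), (N.W l i j * hiddenOut N x l j -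
                N'.W l i j * hiddenOut N' x l j)) - (N.v (l+1) i - N'.v (l+1) i) := by
            rw [Finset.sum_sub_distrib]; ring
          rw [this]
          exact abs_sub _ _
      _ ≤ (p l : ℝ) * (ε * B + ε * l * B) + ε := add_le_add hsum (hclv l hlL'' i hi)
      _ ≤ ε * (l+1) * (((p l : ℝ) + 1) * B) := by
          have hp0 : (0:ℝ) ≤ (p l : ℝ) := Nat.cast_nonneg _
          have hl0 : (0:ℝ) ≤ (l : ℝ) := Nat.cast_nonneg _
          nlinarith [mul_nonneg hε (mul_nonneg hl0 (le_trans zero_le_one hB1))]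
      _ = ε * ((l:ℝ)+1) * ∏ k ∈ range (l+1), ((p k : ℝ) + 1) := by
          rw [prod_range_succ]; ring
      _ = ε * ((l+1 : ℕ) : ℝ) * ∏ k ∈ range (l+1), ((p k : ℝ) + 1) := by push_cast; ring

lemma netEval_close {p0 : ℕ} (N N' : ReluNet p0) (p : ℕ → ℕ) (L : ℕ)
    (hw : N.width = p) (hw' : N'.width = p) (hL : N.L = L) (hL' : N'.L = L)
    (hp1 : p (L+1) = 1) (ε : ℝ) (hε : 0 ≤ ε)
    (hW : ∀ l i j, |N.W l i j| ≤ 1) (hv : ∀ l i, |N.v l i| ≤ 1)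
    (hW' : ∀ l i j, |N'.W l i j| ≤ 1)
    (hclW : ∀ l, l ≤ L → ∀ i, i < p (l+1) → ∀ j, j < p l → |N.W l i j - N'.W l i j| ≤ ε)
    (hclv : ∀ l, l < L → ∀ i, i < p (l+1) → |N.v (l+1) i - N'.v (l+1) i| ≤ ε)
    (x : Fin p0 → ℝ) (hx : x ∈ cube p0) :
    |netEval N x - netEval N' x| ≤ ε * (L+1) * ∏ k ∈ range (L+1), ((p k : ℝ) + 1) := by
  have hB1 : (1:ℝ) ≤ ∏ k ∈ range L, ((p k : ℝ) + 1) := one_le_B p L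
  set B : ℝ := ∏ k ∈ range L, ((p k : ℝ) + 1) with hBdef
  have hclW' : ∀ l, l < L → ∀ i, i < p (l+1) → ∀ j, j < p l → |N.W l i j - N'.W l i j| ≤ ε :=
    fun l hl => hclW l (le_of_lt hl)
  have hterm : ∀ j, j < p L →
      |N.W L 0 j * hiddenOut N x L j - N'.W L 0 j * hiddenOut N' x L j| ≤ ε * B + ε * L * B := by
    intro j hj
    have h0 : (0:ℕ) < p (L+1) := by rw [hp1]; norm_num
    have hdecomp : N.W L 0 j * hiddenOut N x L j - N'.W L 0 j * hiddenOut N' x L j =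
        (N.W L 0 j - N'.W L 0 j) * hiddenOut N x L j +
        N'.W L 0 j * (hiddenOut N x L j - hiddenOut N' x L j) := by ring
    rw [hdecomp]
    calc |(N.W L 0 j - N'.W L 0 j) * hiddenOut N x L j +
        N'.W L 0 j * (hiddenOut N x L j - hiddenOut N' x L j)|
        ≤ |(N.W L 0 j - N'.W L 0 j) * hiddenOut N x L j| +
          |N'.W L 0 j * (hiddenOut N x L j - hiddenOut N' x L j)| := abs_add_le _ _
      _ ≤ ε * B + 1 * (ε * L * B) := by
          rw [abs_mul, abs_mul]
          apply add_le_add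
          · exact mul_le_mul (hclW L le_rfl 0 h0 j hj) (hidden_bound N p hw hW hv x hx L j)
              (abs_nonneg _) hε
          · exact mul_le_mul (hW' L 0 j)
              (hidden_close N N' p L hw hw' ε hε hW hv hW' hclW' hclv x hx L le_rfl j hj)
              (abs_nonneg _) zero_le_one
      _ = ε * B + ε * L * B := by ring
  have hre : netEval N x - netEval N' x =
      ∑ j ∈ Finset.range (p L), (N.W L 0 j * hiddenOut N x L j -
        N'.W L 0 j * hiddenOut N' x L j) := by
    rw [netEval, netEval, hw, hw', hL, hL', Finset.sum_sub_distrib]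
  rw [hre]
  calc |∑ j ∈ Finset.range (p L), (N.W L 0 j * hiddenOut N x L j -
        N'.W L 0 j * hiddenOut N' x L j)|
      ≤ ∑ j ∈ Finset.range (p L), |N.W L 0 j * hiddenOut N x L j -
        N'.W L 0 j * hiddenOut N' x L j| := Finset.abs_sum_le_sum_abs _ _
    _ ≤ ∑ _j ∈ Finset.range (p L), (ε * B + ε * L * B) :=
        Finset.sum_le_sum (fun j hj => hterm j (Finset.mem_range.1 hj))
    _ = (p L : ℝ) * (ε * B + ε * L * B) := by rw [Finset.sum_const, card_range, nsmul_eq_mul]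
    _ ≤ ε * (L+1) * (((p L : ℝ) + 1) * B) := by
        have hp0 : (0:ℝ) ≤ (p L : ℝ) := Nat.cast_nonneg _
        have hl0 : (0:ℝ) ≤ (L : ℝ) := Nat.cast_nonneg _
        nlinarith [mul_nonneg hε (mul_nonneg hl0 (le_trans zero_le_one hB1))]
    _ = ε * ((L:ℝ)+1) * ∏ k ∈ range (L+1), ((p k : ℝ) + 1) := by
        rw [prod_range_succ]; ring

/-! ### Decoding codes into networks -/

abbrev Idx : Type := (ℕ × ℕ × ℕ) ⊕ (ℕ × ℕ)

def wT (M : ℕ) (o : Option (Idx × ℤ)) (l i j : ℕ) : ℝ :=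
  match o with
  | some (Sum.inl (l', i', j'), z) => if l' = l ∧ i' = i ∧ j' = j then (z : ℝ) / M else 0
  | _ => 0

def vT (M : ℕ) (o : Option (Idx × ℤ)) (l i : ℕ) : ℝ :=
  match o with
  | some (Sum.inr (l', i'), z) => if l' + 1 = l ∧ i' = i then (z : ℝ) / M else 0
  | _ => 0

lemma wT_none (M l i j : ℕ) : wT M none l i j = 0 := rfl

lemma wT_eq (M : ℕ) (l i j : ℕ) (z : ℤ) :
    wT M (some (Sum.inl (l, i, j), z)) l i j = (z : ℝ) / M := by
  simp [wT]

lemma wT_ne (M : ℕ) (l i j : ℕ) (b : Idx) (z : ℤ) (hb : b ≠ Sum.inl (l, i, j)) :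
    wT M (some (b, z)) l i j = 0 := by
  rcases b with ⟨l', i', j'⟩ | q
  · simp only [wT]
    rw [if_neg]
    rintro ⟨rfl, rfl, rfl⟩
    exact hb rfl
  · rfl

lemma vT_none (M l i : ℕ) : vT M none l i = 0 := rfl

lemma vT_eq (M : ℕ) (l i : ℕ) (z : ℤ) :
    vT M (some (Sum.inr (l, i), z)) (l+1) i = (z : ℝ) / M := by
  simp [vT]

lemma vT_ne (M : ℕ) (l i : ℕ) (b : Idx) (z : ℤ) (hb : b ≠ Sum.inr (l, i)) :
    vT M (some (b, z)) (l+1) i = 0 := by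
  rcases b with q | ⟨l', i'⟩
  · rfl
  · simp only [vT]
    rw [if_neg]
    rintro ⟨h1, rfl⟩
    exact hb (by rw [Nat.succ_injective h1])

lemma vT_zero (M i : ℕ) (b : Idx) (z : ℤ) : vT M (some (b, z)) 0 i = 0 := by
  rcases b with q | ⟨l', i'⟩
  · rfl
  · simp [vT]

def decodeN (p0 M L : ℕ) (p : ℕ → ℕ) (s : ℕ) (c : Fin s → Option (Idx × ℤ)) : ReluNet p0 where
  L := L
  width := p
  W := fun l i j => ∑ k : Fin s, wT M (c k) l i j
  v := fun l i => ∑ k : Fin s, vT M (c k) l i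

/-! ### Counting -/

lemma one_le_prodNat (p : ℕ → ℕ) (n : ℕ) : 1 ≤ ∏ l ∈ range n, (p l + 1) :=
  Finset.one_le_prod' (fun i _ => Nat.succ_le_succ (Nat.zero_le _))

lemma sum_le_prod_nat (p : ℕ → ℕ) (n : ℕ) :
    (∑ l ∈ Finset.range n, p (l+1) * (p l + 1)) ≤ ∏ l ∈ Finset.range (n+1), (p l + 1) := by
  induction n with
  | zero => simp
  | succ n ih =>
    rw [Finset.sum_range_succ, Finset.prod_range_succ (n := n+1)]
    have h2 : p n + 1 ≤ ∏ l ∈ Finset.range (n+1), (p l + 1) := by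
      rw [Finset.prod_range_succ]
      exact Nat.le_mul_of_pos_left _ (one_le_prodNat p n)
    nlinarith [ih, h2]

lemma arith_one_le (L : ℕ) (V δ : ℝ) (hV1 : 1 ≤ V) (hδ : 0 < δ) (hδ1 : δ ≤ 1) :
    (1:ℝ) ≤ 7 * δ⁻¹ * ((L:ℝ)+1) * V^2 := by
  have hδinv : (1:ℝ) ≤ δ⁻¹ := by
    rw [← one_div, le_div_iff₀ hδ]; linarith
  have hL1R : (1:ℝ) ≤ (L:ℝ)+1 := by
    have := Nat.cast_nonneg (α := ℝ) L; linarith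
  have hV2 : (1:ℝ) ≤ V^2 := by nlinarith
  have ha : (1:ℝ) ≤ δ⁻¹ * ((L:ℝ)+1) := by nlinarith
  nlinarith

lemma arith_bound (L : ℕ) (V δ Icard Gcard Ocard Mr : ℝ)
    (hV1 : 1 ≤ V) (hδ : 0 < δ) (hδ1 : δ ≤ 1) (hMr1 : 1 ≤ Mr)
    (hMlt : Mr ≤ 2*(((L:ℝ)+1)*V/δ))
    (hI : Icard ≤ V) (hInn : 0 ≤ Icard) (hG : Gcard ≤ 2*Mr+1) (hGnn : 0 ≤ Gcard)
    (hOc : Ocard ≤ Icard*Gcard + 1) :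
    Ocard ≤ 7 * δ⁻¹ * ((L:ℝ)+1) * V^2 := by
  have hδinv : (1:ℝ) ≤ δ⁻¹ := by
    rw [← one_div, le_div_iff₀ hδ]; linarith
  have hL1R : (1:ℝ) ≤ (L:ℝ)+1 := by
    have := Nat.cast_nonneg (α := ℝ) L; linarith
  have hV0 : (0:ℝ) ≤ V := by linarith
  have h2 : Ocard ≤ V * (2*Mr+1) + 1 := by nlinarith
  have h3 : Ocard ≤ V * (3*Mr) + 1 := by nlinarith
  have h4 : V * (3*Mr) ≤ V * (3*(2 * (((L:ℝ)+1) * V / δ))) := by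
    have := mul_le_mul_of_nonneg_left hMlt (by linarith : (0:ℝ) ≤ 3*V)
    nlinarith
  have h5 : V * (3*(2 * (((L:ℝ)+1) * V / δ))) = 6 * (δ⁻¹ * (((L:ℝ)+1) * V^2)) := by
    rw [div_eq_mul_inv]; ring
  have hV2 : (1:ℝ) ≤ V^2 := by nlinarith
  have hb : (1:ℝ) ≤ ((L:ℝ)+1) * V^2 := by nlinarith
  have ha : (1:ℝ) ≤ δ⁻¹ * (((L:ℝ)+1) * V^2) := by nlinarith
  calc Ocard ≤ V * (3*Mr) + 1 := h3
    _ ≤ V * (3*(2 * (((L:ℝ)+1) * V / δ))) + 1 := by linarith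
    _ = 6 * (δ⁻¹ * (((L:ℝ)+1) * V^2)) + 1 := by rw [h5]
    _ ≤ 7 * δ⁻¹ * ((L:ℝ)+1) * V^2 := by nlinarith

end Stmt13Aux

open Stmt13Aux

/-- There exists an absolute constant `C > 0` such that for every
depth `L ≥ 1`, width vector `p` with `p (L+1) = 1`, sparsity `s ≥ 1`, envelope `F > 0`
and every `δ ∈ (0,1]`, the class `F(L,p,s,F)` of centered `s`-sparse ReLU networks on
`[0,1]^{p0}` admits a `δ`-net `𝒩` in the sup norm with
`log #𝒩 ≤ (s+1) · log (C δ⁻¹ (L+1) V²)` where `V = Π_{l=0}^{L+1} (p_l + 1)`. -/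
theorem stmt13 :
    ∃ C : ℝ, 0 < C ∧
      ∀ (p0 L : ℕ) (p : ℕ → ℕ) (s : ℕ) (F δ : ℝ),
        1 ≤ L → p 0 = p0 → p (L + 1) = 1 → 1 ≤ s → 0 < F → 0 < δ → δ ≤ 1 →
          ∃ 𝒩 : Finset ((Fin p0 → ℝ) → ℝ),
            (∀ g ∈ sparseReluClass p0 L p s F, ∃ h ∈ 𝒩,
              ∀ x ∈ cube p0, |g x - h x| ≤ δ) ∧
            Real.log (𝒩.card) ≤
              (s + 1 : ℝ) *
                Real.log (C * δ⁻¹ * (L + 1) *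
                  (∏ l ∈ Finset.range (L + 2), ((p l : ℝ) + 1)) ^ 2) := by
  classical
  refine ⟨7, by norm_num, ?_⟩
  intro p0 L p s F δ hL1 hp0 hpL1 hs1 hF hδ hδ1
  set V : ℝ := ∏ l ∈ Finset.range (L + 2), ((p l : ℝ) + 1) with hVdef
  have hV1 : (1:ℝ) ≤ V := one_le_B p (L+2)
  have hVpos : (0:ℝ) < V := lt_of_lt_of_le zero_lt_one hV1
  have hL1R : (1:ℝ) ≤ (L:ℝ) + 1 := by
    have := Nat.cast_nonneg (α := ℝ) L; linarith
  have hq0 : (0:ℝ) < ((L:ℝ)+1) * V / δ := by positivity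
  set M : ℕ := ⌈((L:ℝ)+1) * V / δ⌉₊ with hMdef
  have hM1 : 1 ≤ M := Nat.one_le_ceil_iff.2 hq0
  have hMge : ((L:ℝ)+1) * V / δ ≤ (M:ℝ) := Nat.le_ceil _
  have hq1 : (1:ℝ) ≤ ((L:ℝ)+1) * V / δ := by
    rw [le_div_iff₀ hδ]; nlinarith
  have hMlt : (M:ℝ) ≤ 2 * (((L:ℝ)+1) * V / δ) := by
    have h2 := Nat.ceil_lt_add_one (le_of_lt hq0)
    rw [← hMdef] at h2
    linarith
  have hMpos : (0:ℝ) < (M:ℝ) := by exact_mod_cast hM1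
  set SWfull : Finset (ℕ × ℕ × ℕ) :=
    (Finset.range (L+1)).biUnion
      (fun l => {l} ×ˢ (Finset.range (p (l+1)) ×ˢ Finset.range (p l))) with hSWfull
  set Svfull : Finset (ℕ × ℕ) :=
    (Finset.range L).biUnion (fun l => {l} ×ˢ Finset.range (p (l+1))) with hSvfull
  set Isum : Finset Idx := SWfull.disjSum Svfull with hIsum
  set Gz : Finset ℤ := (Finset.Icc (-(M:ℤ)) (M:ℤ)).erase 0 with hGz
  set O : Finset (Option (Idx × ℤ)) := insert none ((Isum ×ˢ Gz).image some) with hO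
  set Nset : Finset ((Fin p0 → ℝ) → ℝ) := (Fintype.piFinset (fun _ : Fin s => O)).image
    (fun c x => netEval (decodeN p0 M L p s c) x - netEval (decodeN p0 M L p s c) 0) with hNset
  clear_value V M SWfull Svfull Isum Gz O Nset
  refine ⟨Nset, ?_, ?_⟩
  · -- covering property
    rintro g ⟨N, hNL, hNw, -, -, ⟨hbW, hbv⟩, hsp, hgx, -⟩
    set val : Idx → ℤ := Sum.elim (fun q => rM M (N.W q.1 q.2.1 q.2.2))
      (fun q => rM M (N.v (q.1+1) q.2)) with hval
    set S : Finset Idx :=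
      (SWfull.filter (fun q => rM M (N.W q.1 q.2.1 q.2.2) ≠ 0)).disjSum
      (Svfull.filter (fun q => rM M (N.v (q.1+1) q.2) ≠ 0)) with hS
    have hScard : S.card ≤ s := by
      have hsp' : (∑ l ∈ Finset.range (L + 1),
          ((Finset.range (p (l + 1)) ×ˢ Finset.range (p l)).filter
            (fun ij => N.W l ij.1 ij.2 ≠ 0)).card) +
          (∑ l ∈ Finset.range L,
            ((Finset.range (p (l + 1))).filter (fun i => N.v (l + 1) i ≠ 0)).card) ≤ s := by
        unfold sparsity at hsp
        rw [hNL, hNw] at hsp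
        exact hsp
      rw [hS, Finset.card_disjSum]
      have hA : (SWfull.filter (fun q => rM M (N.W q.1 q.2.1 q.2.2) ≠ 0)).card ≤
          ∑ l ∈ Finset.range (L + 1),
            ((Finset.range (p (l + 1)) ×ˢ Finset.range (p l)).filter
              (fun ij => N.W l ij.1 ij.2 ≠ 0)).card := by
        rw [hSWfull, Finset.filter_biUnion]
        refine Finset.card_biUnion_le.trans (Finset.sum_le_sum ?_)
        intro l _
        have hsub : (({l} ×ˢ (Finset.range (p (l + 1)) ×ˢ Finset.range (p l))).filter
            (fun q => rM M (N.W q.1 q.2.1 q.2.2) ≠ 0)) ⊆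
            {l} ×ˢ ((Finset.range (p (l + 1)) ×ˢ Finset.range (p l)).filter
              (fun ij => N.W l ij.1 ij.2 ≠ 0)) := by
          intro q hq
          obtain ⟨hq1, hq2⟩ := Finset.mem_filter.1 hq
          obtain ⟨hql, hqr⟩ := Finset.mem_product.1 hq1
          have hqleq : q.1 = l := Finset.mem_singleton.1 hql
          refine Finset.mem_product.2 ⟨hql, Finset.mem_filter.2 ⟨hqr, ?_⟩⟩
          intro h0
          apply hq2
          rw [hqleq, h0]
          exact rM_zero M
        refine (Finset.card_le_card hsub).trans (le_of_eq ?_)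
        rw [Finset.card_product, Finset.card_singleton, one_mul]
      have hB : (Svfull.filter (fun q => rM M (N.v (q.1+1) q.2) ≠ 0)).card ≤
          ∑ l ∈ Finset.range L,
            ((Finset.range (p (l + 1))).filter (fun i => N.v (l + 1) i ≠ 0)).card := by
        rw [hSvfull, Finset.filter_biUnion]
        refine Finset.card_biUnion_le.trans (Finset.sum_le_sum ?_)
        intro l _
        have hsub : (({l} ×ˢ Finset.range (p (l + 1))).filter
            (fun q => rM M (N.v (q.1+1) q.2) ≠ 0)) ⊆
            {l} ×ˢ ((Finset.range (p (l + 1))).filter (fun i => N.v (l + 1) i ≠ 0)) := by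
          intro q hq
          obtain ⟨hq1, hq2⟩ := Finset.mem_filter.1 hq
          obtain ⟨hql, hqr⟩ := Finset.mem_product.1 hq1
          have hqleq : q.1 = l := Finset.mem_singleton.1 hql
          refine Finset.mem_product.2 ⟨hql, Finset.mem_filter.2 ⟨hqr, ?_⟩⟩
          intro h0
          apply hq2
          rw [hqleq, h0]
          exact rM_zero M
        refine (Finset.card_le_card hsub).trans (le_of_eq ?_)
        rw [Finset.card_product, Finset.card_singleton, one_mul]
      omega
    set c : Fin s → Option (Idx × ℤ) := codeOf s S hScard val with hc
    -- membership of the code in the parameter cube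
    have hcmem : c ∈ Fintype.piFinset (fun _ : Fin s => O) := by
      rw [Fintype.mem_piFinset]
      intro k
      rcases codeOf_cases s S hScard val k with h | ⟨a, haS, h⟩
      · rw [hc, h, hO]
        exact Finset.mem_insert_self _ _
      · rw [hc, h, hO]
        apply Finset.mem_insert_of_mem
        apply Finset.mem_image_of_mem
        refine Finset.mem_product.2 ⟨?_, ?_⟩
        · -- a ∈ Isum
          rw [hIsum]
          rw [hS] at haS
          rcases a with q | q
          · exact Finset.inl_mem_disjSum.2
              (Finset.mem_filter.1 (Finset.inl_mem_disjSum.1 haS)).1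
          · exact Finset.inr_mem_disjSum.2
              (Finset.mem_filter.1 (Finset.inr_mem_disjSum.1 haS)).1
        · -- val a ∈ Gz
          rw [hGz]
          rw [hS] at haS
          rcases a with q | q
          · have hne := (Finset.mem_filter.1 (Finset.inl_mem_disjSum.1 haS)).2
            refine Finset.mem_erase.2 ⟨?_, Finset.mem_Icc.2 ⟨?_, ?_⟩⟩
            · simpa [hval] using hne
            · simpa [hval] using le_rM M (hbW q.1 q.2.1 q.2.2)
            · simpa [hval] using rM_le M (hbW q.1 q.2.1 q.2.2)
          · have hne := (Finset.mem_filter.1 (Finset.inr_mem_disjSum.1 haS)).2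
            refine Finset.mem_erase.2 ⟨?_, Finset.mem_Icc.2 ⟨?_, ?_⟩⟩
            · simpa [hval] using hne
            · simpa [hval] using le_rM M (hbv (q.1+1) q.2)
            · simpa [hval] using rM_le M (hbv (q.1+1) q.2)
    set N' : ReluNet p0 := decodeN p0 M L p s c with hN'
    clear_value val S c N'
    -- decode identities
    have hW'eq : ∀ l i j, N'.W l i j =
        if Sum.inl (l,i,j) ∈ S then (rM M (N.W l i j) : ℝ) / M else 0 := by
      intro l i j
      calc N'.W l i j = ∑ k : Fin s, wT M (codeOf s S hScard val k) l i j := by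
            rw [hN', hc]
            rfl
        _ = if Sum.inl (l,i,j) ∈ S then
              wT M (some (Sum.inl (l,i,j), val (Sum.inl (l,i,j)))) l i j else 0 :=
            codeOf_sum s S hScard val (fun o => wT M o l i j) (Sum.inl (l,i,j)) rfl
              (fun b z hb => wT_ne M l i j b z hb)
        _ = if Sum.inl (l,i,j) ∈ S then (rM M (N.W l i j) : ℝ) / M else 0 := by
            split_ifs
            · have hvv : val (Sum.inl (l,i,j)) = rM M (N.W l i j) := by simp [hval]
              rw [hvv, wT_eq]
            · rfl
    have hv'eq : ∀ l i, N'.v (l+1) i =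
        if Sum.inr (l,i) ∈ S then (rM M (N.v (l+1) i) : ℝ) / M else 0 := by
      intro l i
      calc N'.v (l+1) i = ∑ k : Fin s, vT M (codeOf s S hScard val k) (l+1) i := by
            rw [hN', hc]
            rfl
        _ = if Sum.inr (l,i) ∈ S then
              vT M (some (Sum.inr (l,i), val (Sum.inr (l,i)))) (l+1) i else 0 :=
            codeOf_sum s S hScard val (fun o => vT M o (l+1) i) (Sum.inr (l,i)) rfl
              (fun b z hb => vT_ne M l i b z hb)
        _ = if Sum.inr (l,i) ∈ S then (rM M (N.v (l+1) i) : ℝ) / M else 0 := by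
            split_ifs
            · have hvv : val (Sum.inr (l,i)) = rM M (N.v (l+1) i) := by simp [hval]
              rw [hvv, vT_eq]
            · rfl
    have hv'eq0 : ∀ i, N'.v 0 i = 0 := by
      intro i
      calc N'.v 0 i = ∑ k : Fin s, vT M (codeOf s S hScard val k) 0 i := by
            rw [hN', hc]
            rfl
        _ = 0 := Finset.sum_eq_zero (fun k _ => by
            rcases codeOf_cases s S hScard val k with h | ⟨a, _, h⟩
            · rw [h]; rfl
            · rw [h]; exact vT_zero M i a (val a))
    have hbW' : ∀ l i j, |N'.W l i j| ≤ 1 := by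
      intro l i j
      rw [hW'eq l i j]
      split_ifs
      · exact rM_div_abs_le M hM1 (hbW l i j)
      · simp
    have hbv' : ∀ l i, |N'.v l i| ≤ 1 := by
      intro l i
      match l with
      | 0 => rw [hv'eq0 i]; simp
      | Nat.succ l =>
        rw [hv'eq l i]
        split_ifs
        · exact rM_div_abs_le M hM1 (hbv (l+1) i)
        · simp
    -- closeness of parameters
    have hclW : ∀ l, l ≤ L → ∀ i, i < p (l+1) → ∀ j, j < p l →
        |N.W l i j - N'.W l i j| ≤ 1/(2*(M:ℝ)) := by
      intro l hl i hi j hj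
      have hfull : (l, i, j) ∈ SWfull := by
        rw [hSWfull]
        refine Finset.mem_biUnion.2 ⟨l, Finset.mem_range.2 (by omega), ?_⟩
        exact Finset.mem_product.2 ⟨Finset.mem_singleton_self l,
          Finset.mem_product.2 ⟨Finset.mem_range.2 hi, Finset.mem_range.2 hj⟩⟩
      have hWeq : N'.W l i j = (rM M (N.W l i j) : ℝ)/M := by
        rw [hW'eq l i j]
        by_cases hmem : Sum.inl (l,i,j) ∈ S
        · rw [if_pos hmem]
        · rw [if_neg hmem]
          have h0 : rM M (N.W l i j) = 0 := by
            by_contra hne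
            apply hmem
            rw [hS]
            exact Finset.inl_mem_disjSum.2 (Finset.mem_filter.2 ⟨hfull, hne⟩)
          rw [h0]
          simp
      rw [hWeq, abs_sub_comm]
      exact rM_div_close M hM1 (N.W l i j)
    have hclv : ∀ l, l < L → ∀ i, i < p (l+1) →
        |N.v (l+1) i - N'.v (l+1) i| ≤ 1/(2*(M:ℝ)) := by
      intro l hl i hi
      have hfull : (l, i) ∈ Svfull := by
        rw [hSvfull]
        refine Finset.mem_biUnion.2 ⟨l, Finset.mem_range.2 (by omega), ?_⟩
        exact Finset.mem_product.2 ⟨Finset.mem_singleton_self l, Finset.mem_range.2 hi⟩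
      have hveq : N'.v (l+1) i = (rM M (N.v (l+1) i) : ℝ)/M := by
        rw [hv'eq l i]
        by_cases hmem : Sum.inr (l,i) ∈ S
        · rw [if_pos hmem]
        · rw [if_neg hmem]
          have h0 : rM M (N.v (l+1) i) = 0 := by
            by_contra hne
            apply hmem
            rw [hS]
            exact Finset.inr_mem_disjSum.2 (Finset.mem_filter.2 ⟨hfull, hne⟩)
          rw [h0]
          simp
      rw [hveq, abs_sub_comm]
      exact rM_div_close M hM1 (N.v (l+1) i)
    -- conclude with the perturbation bound
    have hε : (0:ℝ) ≤ 1/(2*(M:ℝ)) := by positivity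
    have hclose : ∀ y ∈ cube p0, |netEval N y - netEval N' y| ≤
        (1/(2*(M:ℝ))) * ((L:ℝ)+1) * ∏ k ∈ Finset.range (L+1), ((p k : ℝ) + 1) := by
      intro y hy
      exact netEval_close N N' p L hNw (by rw [hN']; rfl) hNL (by rw [hN']; rfl)
        hpL1 (1/(2*(M:ℝ))) hε hbW hbv hbW' hclW hclv y hy
    have h0cube : (0 : Fin p0 → ℝ) ∈ cube p0 := by
      intro i
      exact ⟨le_rfl, zero_le_one⟩
    refine ⟨_, by rw [hNset]; exact Finset.mem_image_of_mem _ hcmem, ?_⟩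
    intro x hx
    rw [hgx x]
    have hBL1 : ∏ k ∈ Finset.range (L+1), ((p k : ℝ) + 1) ≤ V := by
      rw [hVdef, Finset.prod_range_succ (n := L+1)]
      have h1 : (1:ℝ) ≤ (p (L+1) : ℝ) + 1 := by
        have := Nat.cast_nonneg (α := ℝ) (p (L+1)); linarith
      nlinarith [one_le_B p (L+1)]
    have hkey : ((L:ℝ)+1) * V ≤ (M:ℝ) * δ := (div_le_iff₀ hδ).1 hMge
    set BL1 : ℝ := ∏ k ∈ Finset.range (L+1), ((p k : ℝ) + 1) with hBL1def
    have hBL1pos : (0:ℝ) < BL1 := lt_of_lt_of_le zero_lt_one (one_le_B p (L+1))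
    calc |netEval N x - netEval N 0 -
          (netEval (decodeN p0 M L p s c) x - netEval (decodeN p0 M L p s c) 0)|
        = |(netEval N x - netEval N' x) - (netEval N 0 - netEval N' 0)| := by
          rw [hN']
          congr 1
          ring
      _ ≤ |netEval N x - netEval N' x| + |netEval N 0 - netEval N' 0| := abs_sub _ _
      _ ≤ (1/(2*(M:ℝ))) * ((L:ℝ)+1) * BL1 + (1/(2*(M:ℝ))) * ((L:ℝ)+1) * BL1 :=
          add_le_add (hclose x hx) (hclose 0 h0cube)
      _ = ((L:ℝ)+1) * BL1 / M := by field_simp; ring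
      _ ≤ δ := by
          rw [div_le_iff₀ hMpos]
          calc ((L:ℝ)+1) * BL1 ≤ ((L:ℝ)+1) * V := by nlinarith
            _ ≤ δ * M := by linarith
  · -- cardinality bound
    have hIsumcard : ((Isum.card : ℕ) : ℝ) ≤ V := by
      have h1 : SWfull.card ≤ ∑ l ∈ Finset.range (L+1), p (l+1) * p l := by
        rw [hSWfull]
        refine Finset.card_biUnion_le.trans (le_of_eq (Finset.sum_congr rfl ?_))
        intro l _
        rw [Finset.card_product, Finset.card_product, Finset.card_singleton,
          Finset.card_range, Finset.card_range, one_mul]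
      have h2 : Svfull.card ≤ ∑ l ∈ Finset.range L, p (l+1) := by
        rw [hSvfull]
        refine Finset.card_biUnion_le.trans (le_of_eq (Finset.sum_congr rfl ?_))
        intro l _
        rw [Finset.card_product, Finset.card_singleton, Finset.card_range, one_mul]
      have h3 : ∑ l ∈ Finset.range L, p (l+1) ≤ ∑ l ∈ Finset.range (L+1), p (l+1) :=
        Finset.sum_le_sum_of_subset (Finset.range_subset_range.2 (Nat.le_succ L))
      have h4 : (∑ l ∈ Finset.range (L+1), p (l+1) * p l) +
          (∑ l ∈ Finset.range (L+1), p (l+1)) =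
          ∑ l ∈ Finset.range (L+1), p (l+1) * (p l + 1) := by
        rw [← Finset.sum_add_distrib]
        exact Finset.sum_congr rfl (fun l _ => by ring)
      have h5 := sum_le_prod_nat p (L+1)
      rw [show L+1+1 = L+2 from rfl] at h5
      have h6 : Isum.card ≤ ∏ l ∈ Finset.range (L+2), (p l + 1) := by
        rw [hIsum, Finset.card_disjSum]
        omega
      calc ((Isum.card : ℕ) : ℝ) ≤ ((∏ l ∈ Finset.range (L+2), (p l + 1) : ℕ) : ℝ) := by
            exact_mod_cast h6
        _ = V := by rw [hVdef]; push_cast; rfl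
    have hGzcard : Gz.card ≤ 2*M + 1 := by
      rw [hGz]
      refine (Finset.card_erase_le).trans ?_
      rw [Int.card_Icc]
      omega
    have hOcard : ((O.card : ℕ) : ℝ) ≤ 7 * δ⁻¹ * ((L:ℝ)+1) * V^2 := by
      have h1 : O.card ≤ Isum.card * Gz.card + 1 := by
        rw [hO]
        refine (Finset.card_insert_le _ _).trans ?_
        have := Finset.card_image_le (f := some) (s := Isum ×ˢ Gz)
        rw [Finset.card_product] at this
        omega
      exact arith_bound L V δ _ _ _ (M:ℝ) hV1 hδ hδ1 (by exact_mod_cast hM1) hMlt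
        hIsumcard (Nat.cast_nonneg _) (by exact_mod_cast hGzcard) (Nat.cast_nonneg _)
        (by exact_mod_cast h1)
    have hBr1 : (1:ℝ) ≤ 7 * δ⁻¹ * ((L:ℝ)+1) * V^2 := arith_one_le L V δ hV1 hδ hδ1
    have hcardN : ((Nset.card : ℕ) : ℝ) ≤ (7 * δ⁻¹ * ((L:ℝ)+1) * V^2)^s := by
      have h1 : Nset.card ≤ O.card ^ s := by
        rw [hNset]
        refine Finset.card_image_le.trans (le_of_eq ?_)
        exact Fintype.card_piFinset_const O s
      calc ((Nset.card : ℕ) : ℝ) ≤ ((O.card ^ s : ℕ) : ℝ) := by exact_mod_cast h1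
        _ = ((O.card : ℕ) : ℝ)^s := by push_cast; rfl
        _ ≤ (7 * δ⁻¹ * ((L:ℝ)+1) * V^2)^s :=
            pow_le_pow_left₀ (Nat.cast_nonneg _) hOcard s
    by_cases hzero : Nset.card = 0
    · rw [hzero]
      rw [Nat.cast_zero, Real.log_zero]
      have hs0 : (0:ℝ) ≤ (s:ℝ) + 1 := by positivity
      exact mul_nonneg hs0 (Real.log_nonneg hBr1)
    · have hpos : (0:ℝ) < ((Nset.card : ℕ) : ℝ) := by
        have := Nat.pos_of_ne_zero hzero
        exact_mod_cast this
      have hlog := Real.log_le_log hpos hcardN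
      rw [Real.log_pow] at hlog
      refine hlog.trans ?_
      have hss : (s:ℝ) ≤ (s:ℝ) + 1 := by linarith
      exact mul_le_mul_of_nonneg_right hss (Real.log_nonneg hBr1)
end
end
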